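/- arXiv:1511.02165 — 4 statements merged into one kernel-verified Lean document; each statement's English description precedes it below -/
import Mathlib

section
/- Let a > 0 and let u be a solution with initial value a on [0,∞). Then for every r ≥ 0, u(r) ≥ a + (φ(a)/(2m))·r². In particular, if φ(a) > 0 then u(r) → ∞ as r → ∞. -/
open MeasureTheory Real Filter Set
open scoped ENNReal Topology

noncomputable section

/-- The interval [0, R) for an extended-real radius `R`. -/
def odeDom (R : ℝ≥0∞) : Set ℝ := {r : ℝ | 0 ≤ r ∧ ENNReal.ofReal r < R}

/-- `u` is a solution with initial value `a` on `[0, R)` of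
u'' + ((m-1)/r) u' = φ(u), u(0) = a, u'(0) = 0, with `u` nonnegative and C². -/
def IsSolOn (m : ℝ) (φ : ℝ → ℝ) (a : ℝ) (R : ℝ≥0∞) (u : ℝ → ℝ) : Prop :=
  ContDiffOn ℝ 2 u (odeDom R) ∧
  (∀ r ∈ odeDom R, 0 ≤ u r) ∧
  u 0 = a ∧
  derivWithin u (Set.Ici 0) 0 = 0 ∧
  ∀ r : ℝ, 0 < r → ENNReal.ofReal r < R →
    deriv (deriv u) r + ((m - 1) / r) * deriv u r = φ (u r)

/-- If `f` is continuous on `[0,∞)`, vanishes at `0`, and has nonnegative derivative on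
`(0,∞)`, then it is nonnegative on `[0,∞)`. -/
lemma aux_nonneg (f f' : ℝ → ℝ) (hc : ContinuousOn f (Set.Ici 0))
    (hd : ∀ r : ℝ, 0 < r → HasDerivAt f (f' r) r)
    (h' : ∀ r : ℝ, 0 < r → 0 ≤ f' r) (h0 : f 0 = 0) :
    ∀ r : ℝ, 0 ≤ r → 0 ≤ f r := by
  intro r hr
  have hmono : MonotoneOn f (Set.Ici 0) := by
    apply monotoneOn_of_deriv_nonneg (convex_Ici 0) hc
    · rw [interior_Ici]
      exact fun x hx => (hd x hx).differentiableAt.differentiableWithinAt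
    · rw [interior_Ici]
      intro x hx
      rw [(hd x hx).deriv]
      exact h' x hx
  have := hmono Set.self_mem_Ici hr hr
  simpa [h0] using this

/-- a global solution with initial value a > 0 grows at least quadratically;
in particular it tends to ∞ when φ(a) > 0. -/
theorem sol_quadratic_growth
    (m : ℝ) (hm : 2 < m)
    (φ : ℝ → ℝ) (hφ0 : φ 0 = 0)
    (hφmono : MonotoneOn φ (Set.Ici 0))
    (hφnonneg : ∀ t : ℝ, 0 ≤ t → 0 ≤ φ t)
    (hφlip : ∀ x ∈ Set.Ici (0 : ℝ), ∃ K : NNReal, ∃ s ∈ nhdsWithin x (Set.Ici 0),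
      LipschitzOnWith K φ s)
    (a : ℝ) (ha : 0 < a)
    (u : ℝ → ℝ) (hu : IsSolOn m φ a ⊤ u) :
    (∀ r : ℝ, 0 ≤ r → a + (φ a / (2 * m)) * r ^ 2 ≤ u r) ∧
      (0 < φ a → Tendsto u atTop atTop) := by
  obtain ⟨hC2, hnn, hu0, hu'0, hode⟩ := hu
  have hdom : odeDom ⊤ = Set.Ici 0 := by
    ext r; simp [odeDom]
  rw [hdom] at hC2 hnn
  have hm0 : (0:ℝ) < m := by linarith
  set v : ℝ → ℝ := derivWithin u (Set.Ici 0) with hvdef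
  have hv0 : v 0 = 0 := hu'0
  have hvcont : ContinuousOn v (Set.Ici 0) :=
    hC2.continuousOn_derivWithin (uniqueDiffOn_Ici 0) one_le_two
  have hveq : ∀ r : ℝ, 0 < r → v r = deriv u r := fun r hr =>
    derivWithin_of_mem_nhds (Ici_mem_nhds hr)
  have hC1 : ContDiffOn ℝ 1 (deriv u) (Set.Ioi 0) :=
    (hC2.mono Set.Ioi_subset_Ici_self).deriv_of_isOpen isOpen_Ioi (by norm_num)
  have hudiff : ∀ r : ℝ, 0 < r → DifferentiableAt ℝ u r := fun r hr =>
    ((hC2.mono Set.Ioi_subset_Ici_self).differentiableOn (by norm_num)).differentiableAt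
      (Ioi_mem_nhds hr)
  have hu' : ∀ r : ℝ, 0 < r → HasDerivAt u (v r) r := fun r hr => by
    rw [hveq r hr]; exact (hudiff r hr).hasDerivAt
  have hv' : ∀ r : ℝ, 0 < r → HasDerivAt v (φ (u r) - ((m-1)/r) * v r) r := by
    intro r hr
    have hdiff : DifferentiableAt ℝ (deriv u) r :=
      (hC1.differentiableOn one_ne_zero).differentiableAt (Ioi_mem_nhds hr)
    have h1 : HasDerivAt (deriv u) (deriv (deriv u) r) r := hdiff.hasDerivAt
    have h2 : deriv (deriv u) r = φ (u r) - ((m-1)/r) * deriv u r := by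
      have := hode r hr (by simp)
      linarith
    rw [h2, ← hveq r hr] at h1
    apply h1.congr_of_eventuallyEq
    filter_upwards [Ioi_mem_nhds hr] with x hx
    exact hveq x hx
  -- the function w r = r^(m-1) * v r
  set w : ℝ → ℝ := fun r => r ^ (m-1) * v r with hwdef
  have hrpow_cont : Continuous fun x : ℝ => x ^ (m-1) := by
    rw [continuous_iff_continuousAt]
    intro x
    exact Real.continuousAt_rpow_const x (m-1) (Or.inr (by linarith))
  have hwcont : ContinuousOn w (Set.Ici 0) :=
    (hrpow_cont.continuousOn).mul hvcont
  have hw0 : w 0 = 0 := by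
    show (0:ℝ) ^ (m-1) * v 0 = 0
    rw [hv0]; ring
  have hw' : ∀ r : ℝ, 0 < r → HasDerivAt w (r ^ (m-1) * φ (u r)) r := by
    intro r hr
    have h1 : HasDerivAt (fun x : ℝ => x ^ (m-1)) ((m-1) * r ^ (m-1-1)) r :=
      Real.hasDerivAt_rpow_const (Or.inl (ne_of_gt hr))
    have h2 : HasDerivAt (fun x => x ^ (m-1) * v x) _ r := h1.mul (hv' r hr)
    convert h2 using 1
    have hrpow : r ^ (m-1-1) = r ^ (m-1) / r := by
      rw [Real.rpow_sub hr, Real.rpow_one]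
    rw [hrpow]
    field_simp
    ring
  have hwpos : ∀ r : ℝ, 0 ≤ r → 0 ≤ w r := by
    apply aux_nonneg w (fun r => r ^ (m-1) * φ (u r)) hwcont hw' _ hw0
    intro r hr
    exact mul_nonneg (Real.rpow_nonneg (le_of_lt hr) _)
      (hφnonneg _ (hnn r (le_of_lt hr)))
  have hvpos : ∀ r : ℝ, 0 < r → 0 ≤ v r := by
    intro r hr
    have h1 : 0 ≤ r ^ (m-1) * v r := hwpos r (le_of_lt hr)
    have hrp : 0 < r ^ (m-1) := Real.rpow_pos_of_pos hr _
    by_contra h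
    push_neg at h
    nlinarith [mul_pos hrp (neg_pos.mpr h)]
  have humono : MonotoneOn u (Set.Ici 0) := by
    apply monotoneOn_of_deriv_nonneg (convex_Ici 0) hC2.continuousOn
    · rw [interior_Ici]
      exact fun x hx => (hu' x hx).differentiableAt.differentiableWithinAt
    · rw [interior_Ici]
      intro x hx
      rw [(hu' x hx).deriv]
      exact hvpos x hx
  have huge : ∀ r : ℝ, 0 ≤ r → a ≤ u r := by
    intro r hr
    have := humono Set.self_mem_Ici hr hr
    simpa [hu0] using this
  have hφge : ∀ r : ℝ, 0 ≤ r → φ a ≤ φ (u r) := fun r hr =>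
    hφmono (le_of_lt ha) (le_trans (le_of_lt ha) (huge r hr)) (huge r hr)
  -- the function g r = w r - φ a * r^m / m
  set g : ℝ → ℝ := fun r => w r - φ a * r ^ m / m with hgdef
  have hrpowm_cont : Continuous fun x : ℝ => x ^ m := by
    rw [continuous_iff_continuousAt]
    intro x
    exact Real.continuousAt_rpow_const x m (Or.inr (le_of_lt hm0))
  have hg0 : g 0 = 0 := by
    show w 0 - φ a * (0:ℝ) ^ m / m = 0
    rw [hw0, Real.zero_rpow (ne_of_gt hm0)]
    ring
  have hgcont : ContinuousOn g (Set.Ici 0) :=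
    hwcont.sub (((continuous_const.mul hrpowm_cont).div_const m).continuousOn)
  have hg' : ∀ r : ℝ, 0 < r →
      HasDerivAt g (r ^ (m-1) * φ (u r) - φ a * (m * r ^ (m-1)) / m) r := by
    intro r hr
    have h1 : HasDerivAt (fun x : ℝ => x ^ m) (m * r ^ (m-1)) r :=
      Real.hasDerivAt_rpow_const (Or.inl (ne_of_gt hr))
    exact (hw' r hr).sub ((h1.const_mul (φ a)).div_const m)
  have hgpos : ∀ r : ℝ, 0 ≤ r → 0 ≤ g r := by
    apply aux_nonneg g _ hgcont hg' _ hg0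
    intro r hr
    have heq : φ a * (m * r ^ (m-1)) / m = r ^ (m-1) * φ a := by
      field_simp
    rw [heq]
    have hrp : 0 ≤ r ^ (m-1) := Real.rpow_nonneg (le_of_lt hr) _
    nlinarith [mul_nonneg hrp (sub_nonneg.mpr (hφge r (le_of_lt hr)))]
  have hvge : ∀ r : ℝ, 0 < r → φ a * r / m ≤ v r := by
    intro r hr
    have hgr : 0 ≤ w r - φ a * r ^ m / m := hgpos r (le_of_lt hr)
    have hrm : r ^ m = r ^ (m-1) * r := by
      rw [← Real.rpow_add_one (ne_of_gt hr) (m-1)]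
      norm_num
    have hrp : 0 < r ^ (m-1) := Real.rpow_pos_of_pos hr _
    have hwr : w r = r ^ (m-1) * v r := rfl
    rw [hwr, hrm] at hgr
    by_contra hcon
    push_neg at hcon
    have h3 : (v r - φ a * r / m) * (m * r ^ (m-1)) < 0 :=
      mul_neg_of_neg_of_pos (by linarith) (mul_pos hm0 hrp)
    have h4 : (v r - φ a * r / m) * (m * r ^ (m-1)) =
        m * (r ^ (m-1) * v r - φ a * (r ^ (m-1) * r) / m) := by
      field_simp
    rw [h4] at h3
    nlinarith [mul_nonneg (le_of_lt hm0) hgr]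
  have hmain : ∀ r : ℝ, 0 ≤ r → a + (φ a / (2 * m)) * r ^ 2 ≤ u r := by
    have key : ∀ r : ℝ, 0 ≤ r → 0 ≤ u r - a - φ a / (2 * m) * r ^ 2 := by
      apply aux_nonneg _ (fun r => v r - φ a / (2 * m) * (2 * r))
      · exact (hC2.continuousOn.sub continuousOn_const).sub
          ((continuous_const.mul (continuous_pow 2)).continuousOn)
      · intro r hr
        have h1 : HasDerivAt (fun x : ℝ => φ a / (2 * m) * x ^ 2)
            (φ a / (2 * m) * (2 * r)) r := by
          have : HasDerivAt (fun x : ℝ => φ a / (2 * m) * x ^ 2) _ r :=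
            (hasDerivAt_pow 2 r).const_mul (φ a / (2 * m))
          convert this using 1
          push_cast
          ring
        exact ((hu' r hr).sub_const a).sub h1
      · intro r hr
        have h1 := hvge r hr
        have : φ a / (2 * m) * (2 * r) = φ a * r / m := by
          field_simp
        rw [this]
        linarith
      · rw [hu0]; ring
    intro r hr
    have := key r hr
    linarith
  refine ⟨hmain, fun hφa => ?_⟩
  have h1 : Tendsto (fun r : ℝ => a + φ a / (2 * m) * r ^ 2) atTop atTop := by
    apply tendsto_atTop_add_const_left
    apply Tendsto.const_mul_atTop (div_pos hφa (by linarith))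
    exact tendsto_pow_atTop (by norm_num)
  apply tendsto_atTop_mono' atTop _ h1
  filter_upwards [eventually_ge_atTop (0:ℝ)] with r hr
  exact hmain r hr
end
end

section
/- Let a ≥ 0 and let u be a solution with initial value a on [0,R). Then for every r ∈ (0,R), φ(u(r))/m ≤ u″(r) ≤ φ(u(r)). -/
open MeasureTheory Real Filter Set
open scoped ENNReal Topology

noncomputable section

lemma odeDom_mem_nhds {R : ℝ≥0∞} {s : ℝ} (hs : 0 < s) (hsR : ENNReal.ofReal s < R) :
    odeDom R ∈ 𝓝 s := by
  obtain ⟨t, hst, htR⟩ : ∃ t : ℝ, s < t ∧ ENNReal.ofReal t < R := by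
    rcases eq_or_ne R ⊤ with hT | hT
    · exact ⟨s + 1, by linarith, hT ▸ ENNReal.ofReal_lt_top⟩
    · have h1 : s < R.toReal := (ENNReal.ofReal_lt_iff_lt_toReal hs.le hT).mp hsR
      refine ⟨(s + R.toReal) / 2, by linarith, ?_⟩
      rw [ENNReal.ofReal_lt_iff_lt_toReal (by linarith) hT]
      linarith
  have hsub : Ioo 0 t ⊆ odeDom R := fun x hx =>
    ⟨hx.1.le, lt_of_le_of_lt (ENNReal.ofReal_le_ofReal hx.2.le) htR⟩
  exact Filter.mem_of_superset (Ioo_mem_nhds hs hst) hsub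

lemma odeDom_uniqueDiffOn (R : ℝ≥0∞) : UniqueDiffOn ℝ (odeDom R) := by
  rcases eq_or_ne R ⊤ with h | h
  · have : odeDom R = Ici 0 := by
      ext x; simp [odeDom, h]
    rw [this]; exact uniqueDiffOn_Ici 0
  · have : odeDom R = Ico 0 R.toReal := by
      ext x
      simp only [odeDom, mem_setOf_eq, mem_Ico, and_congr_right_iff]
      intro hx
      exact ENNReal.ofReal_lt_iff_lt_toReal hx h
    rw [this]; exact uniqueDiffOn_Ico 0 _

/-- two-sided bound on the second derivative of a solution. -/
theorem sol_second_deriv_bounds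
    (m : ℝ) (hm : 2 < m)
    (φ : ℝ → ℝ) (hφ0 : φ 0 = 0)
    (hφmono : MonotoneOn φ (Set.Ici 0))
    (hφnonneg : ∀ t : ℝ, 0 ≤ t → 0 ≤ φ t)
    (hφlip : ∀ x ∈ Set.Ici (0 : ℝ), ∃ K : NNReal, ∃ s ∈ nhdsWithin x (Set.Ici 0),
      LipschitzOnWith K φ s)
    (a : ℝ) (ha : 0 ≤ a) (R : ℝ≥0∞) (hR : 0 < R)
    (u : ℝ → ℝ) (hu : IsSolOn m φ a R u) :
    ∀ r : ℝ, 0 < r → ENNReal.ofReal r < R →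
      φ (u r) / m ≤ deriv (deriv u) r ∧ deriv (deriv u) r ≤ φ (u r) := by
  obtain ⟨hC2, hpos, hu0, hu'0, hode⟩ := hu
  have hm1 : (0:ℝ) < m - 1 := by linarith
  have hm0 : (0:ℝ) < m := by linarith
  set f := derivWithin u (odeDom R) with hf_def
  have hUD := odeDom_uniqueDiffOn R
  have hfc : ContinuousOn f (odeDom R) :=
    hC2.continuousOn_derivWithin hUD (by norm_num)
  have hfs : ∀ s : ℝ, 0 < s → ENNReal.ofReal s < R → f s = deriv u s := fun s hs hsR =>
    derivWithin_of_mem_nhds (odeDom_mem_nhds hs hsR)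
  have hint : ∀ s : ℝ, 0 < s → ENNReal.ofReal s < R → s ∈ interior (odeDom R) :=
    fun s hs hsR => mem_interior_iff_mem_nhds.mpr (odeDom_mem_nhds hs hsR)
  -- f 0 = 0
  have hf0 : f 0 = 0 := by
    have hev : odeDom R =ᶠ[𝓝 (0:ℝ)] Ici 0 := by
      obtain ⟨t, ht0, htR⟩ : ∃ t : ℝ, 0 < t ∧ ENNReal.ofReal t < R := by
        rcases eq_or_ne R ⊤ with h | h
        · exact ⟨1, one_pos, h ▸ ENNReal.ofReal_lt_top⟩
        · have hRt : 0 < R.toReal := ENNReal.toReal_pos hR.ne' h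
          refine ⟨R.toReal / 2, by linarith, ?_⟩
          rw [ENNReal.ofReal_lt_iff_lt_toReal (by linarith) h]
          linarith
      rw [Filter.eventuallyEq_set]
      filter_upwards [Ioo_mem_nhds (by linarith : -t < (0:ℝ)) ht0] with x hx
      constructor
      · exact fun h => h.1
      · exact fun h => ⟨h, lt_of_le_of_lt (ENNReal.ofReal_le_ofReal hx.2.le) htR⟩
    rw [hf_def, derivWithin_congr_set hev, hu'0]
  -- differentiability facts on the interior
  have h2eq : (2 : WithTop ℕ∞) = 1 + 1 := by norm_num
  have hC2' : ContDiffOn ℝ (1 + 1) u (interior (odeDom R)) :=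
    h2eq ▸ hC2.mono interior_subset
  obtain ⟨hdOn, -, hd1⟩ := (contDiffOn_succ_iff_deriv_of_isOpen isOpen_interior).mp hC2'
  have hu_diffAt : ∀ s ∈ interior (odeDom R), DifferentiableAt ℝ u s := fun s hs =>
    (hdOn s hs).differentiableAt (isOpen_interior.mem_nhds hs)
  have hv_diff : ∀ s ∈ interior (odeDom R), HasDerivAt (deriv u) (deriv (deriv u) s) s :=
    fun s hs =>
      (((hd1.differentiableOn one_ne_zero) s hs).differentiableAt
        (isOpen_interior.mem_nhds hs)).hasDerivAt
  -- fix r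
  intro r hr hrR
  have hsubr : Icc 0 r ⊆ odeDom R := fun x hx =>
    ⟨hx.1, lt_of_le_of_lt (ENNReal.ofReal_le_ofReal hx.2) hrR⟩
  have hmem' : ∀ s : ℝ, s ≤ r → ENNReal.ofReal s < R := fun s h2 =>
    lt_of_le_of_lt (ENNReal.ofReal_le_ofReal h2) hrR
  set G : ℝ → ℝ := fun s => s ^ (m - 1) * f s with hG_def
  have hGcont : ContinuousOn G (Icc 0 r) :=
    ((Real.continuous_rpow_const (by linarith)).continuousOn).mul (hfc.mono hsubr)
  have hGderiv : ∀ s ∈ Ioo (0:ℝ) r, HasDerivAt G (s ^ (m - 1) * φ (u s)) s := by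
    intro s hs
    have hs0 : 0 < s := hs.1
    have hsR : ENNReal.ofReal s < R := hmem' s hs.2.le
    have h1 : HasDerivAt (fun x : ℝ => x ^ (m - 1) * deriv u x)
        ((m - 1) * s ^ (m - 1 - 1) * deriv u s + s ^ (m - 1) * deriv (deriv u) s) s :=
      (Real.hasDerivAt_rpow_const (Or.inl hs0.ne')).mul (hv_diff s (hint s hs0 hsR))
    have heq : G =ᶠ[𝓝 s] fun x : ℝ => x ^ (m - 1) * deriv u x := by
      filter_upwards [Ioo_mem_nhds hs.1 hs.2] with x hx
      rw [hG_def]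
      simp only
      rw [hfs x hx.1 (hmem' x hx.2.le)]
    have h3 : (m - 1) * s ^ (m - 1 - 1) * deriv u s + s ^ (m - 1) * deriv (deriv u) s
        = s ^ (m - 1) * φ (u s) := by
      have hode' : deriv (deriv u) s = φ (u s) - (m - 1) / s * deriv u s := by
        have := hode s hs0 hsR; linarith
      have hpow : s ^ (m - 1 - 1) = s ^ (m - 1) / s := by
        rw [Real.rpow_sub hs0, Real.rpow_one]
      rw [hode', hpow]
      field_simp
      ring
    exact h3 ▸ h1.congr_of_eventuallyEq heq
  have hGmono : MonotoneOn G (Icc 0 r) := by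
    apply monotoneOn_of_deriv_nonneg (convex_Icc 0 r) hGcont
    · intro x hx
      rw [interior_Icc] at hx
      exact (hGderiv x hx).differentiableAt.differentiableWithinAt
    · intro x hx
      rw [interior_Icc] at hx
      rw [(hGderiv x hx).deriv]
      exact mul_nonneg (Real.rpow_nonneg hx.1.le _)
        (hφnonneg _ (hpos x (hsubr ⟨hx.1.le, hx.2.le⟩)))
  have hG0 : G 0 = 0 := by simp [hG_def, hf0]
  have hv_nonneg : ∀ s ∈ Ioc (0:ℝ) r, 0 ≤ deriv u s := by
    intro s hs
    have hGs : (0:ℝ) ≤ G s := by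
      rw [← hG0]
      exact hGmono ⟨le_refl 0, hr.le⟩ ⟨hs.1.le, hs.2⟩ hs.1.le
    rw [← hfs s hs.1 (hmem' s hs.2)]
    exact (mul_nonneg_iff_of_pos_left (Real.rpow_pos_of_pos hs.1 (m - 1))).mp hGs
  have humono : MonotoneOn u (Icc 0 r) := by
    apply monotoneOn_of_deriv_nonneg (convex_Icc 0 r) (hC2.continuousOn.mono hsubr)
    · intro x hx
      rw [interior_Icc] at hx
      exact (hu_diffAt x (hint x hx.1 (hmem' x hx.2.le))).differentiableWithinAt
    · intro x hx
      rw [interior_Icc] at hx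
      exact hv_nonneg x ⟨hx.1, hx.2.le⟩
  -- the antitone function H
  set H : ℝ → ℝ := fun s => G s - s ^ m * (φ (u r) / m) with hH_def
  have hHcont : ContinuousOn H (Icc 0 r) :=
    hGcont.sub (((Real.continuous_rpow_const hm0.le).continuousOn).mul continuousOn_const)
  have hHderiv : ∀ s ∈ Ioo (0:ℝ) r,
      HasDerivAt H (s ^ (m - 1) * φ (u s) - m * s ^ (m - 1) * (φ (u r) / m)) s := by
    intro s hs
    exact (hGderiv s hs).sub
      ((Real.hasDerivAt_rpow_const (Or.inl hs.1.ne')).mul_const _)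
  have hHanti : AntitoneOn H (Icc 0 r) := by
    apply antitoneOn_of_deriv_nonpos (convex_Icc 0 r) hHcont
    · intro x hx
      rw [interior_Icc] at hx
      exact (hHderiv x hx).differentiableAt.differentiableWithinAt
    · intro x hx
      rw [interior_Icc] at hx
      rw [(hHderiv x hx).deriv]
      have hφle : φ (u x) ≤ φ (u r) := by
        apply hφmono (hpos x (hsubr ⟨hx.1.le, hx.2.le⟩)) (hpos r (hsubr ⟨hr.le, le_refl r⟩))
        exact humono ⟨hx.1.le, hx.2.le⟩ ⟨hr.le, le_refl r⟩ hx.2.le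
      have hxp : (0:ℝ) ≤ x ^ (m - 1) := Real.rpow_nonneg hx.1.le _
      have hmm : m * x ^ (m - 1) * (φ (u r) / m) = x ^ (m - 1) * φ (u r) := by
        field_simp
      rw [hmm]
      nlinarith [mul_le_mul_of_nonneg_left hφle hxp]
  have hH0 : H 0 = 0 := by
    rw [hH_def]
    simp [hG0, Real.zero_rpow hm0.ne']
  have hHr : H r ≤ 0 := by
    rw [← hH0]
    exact hHanti ⟨le_refl 0, hr.le⟩ ⟨hr.le, le_refl r⟩ hr.le
  -- conclude
  have hfr : f r = deriv u r := hfs r hr hrR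
  have hvr0 : 0 ≤ deriv u r := hv_nonneg r ⟨hr, le_refl r⟩
  have hrp : (0:ℝ) < r ^ (m - 1) := Real.rpow_pos_of_pos hr _
  have hrm : r ^ m = r ^ (m - 1) * r := by
    rw [← Real.rpow_add_one hr.ne' (m - 1)]
    norm_num
  have hvru : deriv u r ≤ r * φ (u r) / m := by
    have hHr' : r ^ (m - 1) * deriv u r - r ^ m * (φ (u r) / m) ≤ 0 := by
      have : H r = r ^ (m-1) * f r - r ^ m * (φ (u r)/m) := rfl
      rw [this, hfr] at hHr
      exact hHr
    rw [hrm] at hHr'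
    have h5 : r ^ (m - 1) * r * (φ (u r) / m) = r ^ (m - 1) * (r * φ (u r) / m) := by
      ring
    have h4 : r ^ (m - 1) * deriv u r ≤ r ^ (m - 1) * (r * φ (u r) / m) := by
      linarith [hHr', h5]
    exact (mul_le_mul_iff_right₀ hrp).mp h4
  have hode_r : deriv (deriv u) r = φ (u r) - (m - 1) / r * deriv u r := by
    have := hode r hr hrR; linarith
  constructor
  · rw [hode_r]
    have h2 : (m - 1) / r * deriv u r ≤ (m - 1) / r * (r * φ (u r) / m) :=
      mul_le_mul_of_nonneg_left hvru (by positivity)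
    have h3 : (m - 1) / r * (r * φ (u r) / m) = φ (u r) - φ (u r) / m := by
      field_simp
    linarith
  · rw [hode_r]
    have : 0 ≤ (m - 1) / r * deriv u r := mul_nonneg (by positivity) hvr0
    linarith
end
end

section
/- Let 0 ≤ a < b, let u be a solution with initial value a on [0,R) and let v be a solution with initial value b on [0,R). Then u(r) < v(r) for every r ∈ [0,R). -/
open MeasureTheory Real Filter Set
open scoped ENNReal Topology

noncomputable section

/-- strict comparison of solutions with ordered initial values. -/
theorem sol_strict_comparison
    (m : ℝ) (hm : 2 < m)
    (φ : ℝ → ℝ) (hφ0 : φ 0 = 0)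
    (hφmono : MonotoneOn φ (Set.Ici 0))
    (hφnonneg : ∀ t : ℝ, 0 ≤ t → 0 ≤ φ t)
    (hφlip : ∀ x ∈ Set.Ici (0 : ℝ), ∃ K : NNReal, ∃ s ∈ nhdsWithin x (Set.Ici 0),
      LipschitzOnWith K φ s)
    (a b : ℝ) (ha : 0 ≤ a) (hab : a < b) (R : ℝ≥0∞) (hR : 0 < R)
    (u v : ℝ → ℝ) (hu : IsSolOn m φ a R u) (hv : IsSolOn m φ b R v) :
    ∀ r : ℝ, 0 ≤ r → ENNReal.ofReal r < R → u r < v r := by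
  obtain ⟨hu1, hu2, hu3, _hu4, hu5⟩ := hu
  obtain ⟨hv1, hv2, hv3, _hv4, hv5⟩ := hv
  -- Basic open set
  have hopen : IsOpen {s : ℝ | ENNReal.ofReal s < R} :=
    isOpen_lt ENNReal.continuous_ofReal continuous_const
  set O : Set ℝ := Ioi 0 ∩ {s : ℝ | ENNReal.ofReal s < R} with hO_def
  have hOopen : IsOpen O := isOpen_Ioi.inter hopen
  have hOD : O ⊆ odeDom R := fun t ht => ⟨le_of_lt ht.1, ht.2⟩
  have hconv : Convex ℝ (odeDom R) := by
    rw [convex_iff_ordConnected]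
    constructor
    intro x hx y hy z hz
    exact ⟨le_trans hx.1 hz.1, lt_of_le_of_lt (ENNReal.ofReal_le_ofReal hz.2) hy.2⟩
  -- O is nonempty
  have h0mem : (0 : ℝ) ∈ {s : ℝ | ENNReal.ofReal s < R} := by
    simp only [Set.mem_setOf_eq, ENNReal.ofReal_zero]; exact hR
  obtain ⟨ε, hε, hball⟩ := Metric.isOpen_iff.mp hopen 0 h0mem
  have hOne : O.Nonempty := by
    refine ⟨ε / 2, half_pos hε, hball ?_⟩
    rw [Metric.mem_ball, Real.dist_eq, sub_zero, abs_of_pos (half_pos hε)]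
    linarith
  have hUD : UniqueDiffOn ℝ (odeDom R) :=
    uniqueDiffOn_convex hconv (hOne.mono (interior_maximal hOD hOopen))
  intro r hr hrR
  by_contra hcon
  push_neg at hcon
  set w : ℝ → ℝ := fun t => v t - u t with hw_def
  have hIcc : Icc 0 r ⊆ odeDom R := fun t ht =>
    ⟨ht.1, lt_of_le_of_lt (ENNReal.ofReal_le_ofReal ht.2) hrR⟩
  have hw2 : ContDiffOn ℝ 2 w (odeDom R) := hv1.sub hu1
  have hwc : ContinuousOn w (Icc 0 r) := hw2.continuousOn.mono hIcc
  set S : Set ℝ := Icc 0 r ∩ w ⁻¹' (Iic 0) with hS_def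
  have hSne : S.Nonempty := ⟨r, ⟨⟨hr, le_refl r⟩, by simp [hw_def]; linarith⟩⟩
  have hScl : IsClosed S := hwc.preimage_isClosed_of_isClosed isClosed_Icc isClosed_Iic
  have hSbb : BddBelow S := ⟨0, fun t ht => ht.1.1⟩
  set r₀ := sInf S with hr0_def
  have hr0S : r₀ ∈ S := hScl.csInf_mem hSne hSbb
  have hw0 : w 0 = b - a := by simp [hw_def, hu3, hv3]
  have hr0pos : 0 < r₀ := by
    rcases lt_or_eq_of_le hr0S.1.1 with h | h
    · exact h
    · exfalso
      have := hr0S.2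
      rw [← h] at this
      simp only [Set.mem_preimage, Set.mem_Iic] at this
      rw [hw0] at this; linarith
  have hr0r : r₀ ≤ r := hr0S.1.2
  have hwr0 : w r₀ ≤ 0 := hr0S.2
  have hIooO : Ioo 0 r₀ ⊆ O := fun t ht =>
    ⟨ht.1, lt_of_le_of_lt (ENNReal.ofReal_le_ofReal (le_trans ht.2.le hr0r)) hrR⟩
  have hlt : ∀ t ∈ Ioo 0 r₀, 0 ≤ u t ∧ u t ≤ v t := by
    intro t ht
    have htS : t ∉ S := fun hmem => absurd (csInf_le hSbb hmem) (not_le.mpr ht.2)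
    have hwt : ¬ (w t ≤ 0) := fun h =>
      htS ⟨⟨ht.1.le, le_trans ht.2.le hr0r⟩, h⟩
    refine ⟨hu2 t (hOD (hIooO ht)), ?_⟩
    simp only [hw_def, not_le] at hwt
    linarith
  -- differentiability facts on O
  have hu1O : ContDiffOn ℝ 2 u O := hu1.mono hOD
  have hv1O : ContDiffOn ℝ 2 v O := hv1.mono hOD
  have huder : ContDiffOn ℝ 1 (deriv u) O := hu1O.deriv_of_isOpen hOopen (by norm_num)
  have hvder : ContDiffOn ℝ 1 (deriv v) O := hv1O.deriv_of_isOpen hOopen (by norm_num)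
  have hOmem : ∀ t ∈ O, O ∈ 𝓝 t := fun t ht => hOopen.mem_nhds ht
  have hudiff : ∀ t ∈ O, DifferentiableAt ℝ u t := fun t ht =>
    ((hu1O.differentiableOn (by norm_num)).differentiableAt (hOmem t ht))
  have hvdiff : ∀ t ∈ O, DifferentiableAt ℝ v t := fun t ht =>
    ((hv1O.differentiableOn (by norm_num)).differentiableAt (hOmem t ht))
  have hud' : ∀ t ∈ O, DifferentiableAt ℝ (deriv u) t := fun t ht =>
    ((huder.differentiableOn (by norm_num)).differentiableAt (hOmem t ht))
  have hvd' : ∀ t ∈ O, DifferentiableAt ℝ (deriv v) t := fun t ht =>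
    ((hvder.differentiableOn (by norm_num)).differentiableAt (hOmem t ht))
  have hderw : ∀ t ∈ O, deriv w t = deriv v t - deriv u t := fun t ht =>
    deriv_sub (hvdiff t ht) (hudiff t ht)
  have hderw_ev : ∀ t ∈ O, deriv w =ᶠ[𝓝 t] fun s => deriv v s - deriv u s := fun t ht =>
    Filter.eventuallyEq_of_mem (hOmem t ht) (fun s hs => hderw s hs)
  have hdd : ∀ t ∈ O, deriv (deriv w) t = deriv (deriv v) t - deriv (deriv u) t := by
    intro t ht
    rw [Filter.EventuallyEq.deriv_eq (hderw_ev t ht)]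
    exact deriv_sub (hvd' t ht) (hud' t ht)
  have hdwdiff : ∀ t ∈ O, DifferentiableAt ℝ (deriv w) t := by
    intro t ht
    exact ((hvd' t ht).sub (hud' t ht)).congr_of_eventuallyEq (hderw_ev t ht)
  -- the ODE for w
  have hODEw : ∀ t ∈ O, deriv (deriv w) t
      = (φ (v t) - φ (u t)) - ((m - 1) / t) * deriv w t := by
    intro t ht
    have h1 := hu5 t ht.1 ht.2
    have h2 := hv5 t ht.1 ht.2
    rw [hdd t ht, hderw t ht]
    linear_combination h2 - h1
  -- the weighted derivative function
  set W := derivWithin w (odeDom R) with hW_def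
  have hWc : ContinuousOn W (odeDom R) := hw2.continuousOn_derivWithin hUD one_le_two
  have hWeq : ∀ t ∈ O, W t = deriv w t := fun t ht =>
    derivWithin_of_mem_nhds (Filter.mem_of_superset (hOmem t ht) hOD)
  set g : ℝ → ℝ := fun t => t ^ (m - 1) * W t with hg_def
  have hm1 : (0 : ℝ) < m - 1 := by linarith
  have hg0 : g 0 = 0 := by
    simp [hg_def, Real.zero_rpow (ne_of_gt hm1)]
  have hIcc0 : Icc 0 r₀ ⊆ odeDom R := subset_trans (Icc_subset_Icc_right hr0r) hIcc
  have hgc : ContinuousOn g (Icc 0 r₀) := by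
    apply ContinuousOn.mul
    · intro t _
      exact (Real.continuousAt_rpow_const t (m - 1) (Or.inr hm1.le)).continuousWithinAt
    · exact hWc.mono hIcc0
  have hgderiv : ∀ t ∈ Ioo 0 r₀,
      HasDerivAt g (t ^ (m - 1) * (φ (v t) - φ (u t))) t := by
    intro t ht
    have htO := hIooO ht
    have htpos : 0 < t := ht.1
    have h1 : HasDerivAt (fun s : ℝ => s ^ (m - 1)) ((m - 1) * t ^ (m - 1 - 1)) t :=
      Real.hasDerivAt_rpow_const (Or.inl (ne_of_gt htpos))
    have h2 : HasDerivAt (deriv w) (deriv (deriv w) t) t := (hdwdiff t htO).hasDerivAt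
    have h3 := h1.mul h2
    have hev : g =ᶠ[𝓝 t] fun s => s ^ (m - 1) * deriv w s := by
      filter_upwards [hOmem t htO] with s hs
      simp only [hg_def]
      rw [hWeq s hs]
    have h4 := h3.congr_of_eventuallyEq hev
    refine h4.congr_deriv ?_
    rw [hODEw t htO]
    have hts : t ^ (m - 1 - 1) = t ^ (m - 1) / t := by
      rw [Real.rpow_sub htpos, Real.rpow_one]
    rw [hts]
    field_simp
    ring
  have hgmono : MonotoneOn g (Icc 0 r₀) := by
    apply monotoneOn_of_deriv_nonneg (convex_Icc 0 r₀) hgc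
    · rw [interior_Icc]
      intro t ht
      exact (hgderiv t ht).differentiableAt.differentiableWithinAt
    · intro t ht
      rw [interior_Icc] at ht
      rw [(hgderiv t ht).deriv]
      apply mul_nonneg (Real.rpow_nonneg ht.1.le _)
      have h := hlt t ht
      have h2 : 0 ≤ v t := le_trans h.1 h.2
      have := hφmono (Set.mem_Ici.mpr h.1) (Set.mem_Ici.mpr h2) h.2
      linarith
  have hWnn : ∀ t ∈ Ioo 0 r₀, 0 ≤ deriv w t := by
    intro t ht
    have hg_ge : g 0 ≤ g t :=
      hgmono ⟨le_refl 0, hr0pos.le⟩ ⟨ht.1.le, ht.2.le⟩ ht.1.le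
    rw [hg0] at hg_ge
    have ht' : (0 : ℝ) < t ^ (m - 1) := Real.rpow_pos_of_pos ht.1 _
    have hWt : 0 ≤ W t := by
      by_contra hneg
      push_neg at hneg
      have : t ^ (m - 1) * W t < 0 := mul_neg_of_pos_of_neg ht' hneg
      simp only [hg_def] at hg_ge
      linarith
    rw [← hWeq t (hIooO ht)]
    exact hWt
  have hwmono : MonotoneOn w (Icc 0 r₀) := by
    apply monotoneOn_of_deriv_nonneg (convex_Icc 0 r₀)
      (hwc.mono (Icc_subset_Icc_right hr0r))
    · rw [interior_Icc]
      intro t ht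
      exact ((hvdiff t (hIooO ht)).sub (hudiff t (hIooO ht))).differentiableWithinAt
    · intro t ht
      rw [interior_Icc] at ht
      exact hWnn t ht
  have hfin := hwmono ⟨le_refl 0, hr0pos.le⟩ ⟨hr0pos.le, le_refl r₀⟩ hr0pos.le
  rw [hw0] at hfin
  linarith
end
end

section
/- One has lim_{ρ→0⁺} R_ρ = ∞; that is, for every M > 0 there exists δ > 0 such that R_ρ > M for every ρ ∈ (0,δ). -/
open MeasureTheory Real Filter Set
open scoped ENNReal Topology

noncomputable section

/-- The maximal existence radius `R_a`: the supremum of all `R ∈ (0, ∞]` such that a solution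
with initial value `a` exists on `[0, R)`. -/
def maxRadius (m : ℝ) (φ : ℝ → ℝ) (a : ℝ) : ℝ≥0∞ :=
  sSup {R : ℝ≥0∞ | 0 < R ∧ ∃ u : ℝ → ℝ, IsSolOn m φ a R u}

private lemma primitive_hasDerivAt {h : ℝ → ℝ} (hh : Continuous h) (r : ℝ) :
    HasDerivAt (fun x => ∫ t in (0:ℝ)..x, h t) (h r) r :=
  intervalIntegral.integral_hasDerivAt_right (hh.intervalIntegrable _ _)
    (hh.stronglyMeasurableAtFilter _ _) hh.continuousAt

private lemma cont_abs_rpow {p : ℝ} (hp : 0 ≤ p) : Continuous fun t : ℝ => |t| ^ p :=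
  continuous_abs.rpow_const (fun _ => Or.inr hp)

private lemma int_abs_rpow {p : ℝ} (hp : 0 < p) {r : ℝ} (hr : 0 ≤ r) :
    ∫ t in (0:ℝ)..r, |t| ^ p = r ^ (p+1) / (p+1) := by
  rw [intervalIntegral.integral_congr (g := fun t => t ^ p) ?_,
    integral_rpow (Or.inl (by linarith : (-1:ℝ) < p))]
  · rw [Real.zero_rpow (by positivity)]; ring
  · intro t ht
    rw [uIcc_of_le hr] at ht
    simp [abs_of_nonneg ht.1]

private lemma int_mul_exp (a : ℝ) (ha : 0 < a) (r : ℝ) :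
    ∫ t in (0:ℝ)..r, t * Real.exp (a * t^2/2) = (Real.exp (a * r^2/2) - 1)/a := by
  have key : ∀ x : ℝ, HasDerivAt (fun t => Real.exp (a * t^2/2)/a) (x * Real.exp (a * x^2/2)) x := by
    intro x
    have h1 : HasDerivAt (fun t : ℝ => a * t^2/2) (a * x) x := by
      have := (hasDerivAt_pow 2 x).const_mul a
      simpa using (this.div_const 2).congr_deriv (by ring)
    have := (h1.exp).div_const a
    simpa using this.congr_deriv (by field_simp)
  rw [intervalIntegral.integral_eq_sub_of_hasDerivAt (fun x _ => key x) ?_]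
  · norm_num
    ring
  · apply Continuous.intervalIntegrable
    continuity

private def Aop (φ u : ℝ → ℝ) (r : ℝ) : ℝ := ∫ t in (0:ℝ)..r, t * φ (u t)

private def Bop (m : ℝ) (φ u : ℝ → ℝ) (r : ℝ) : ℝ := ∫ t in (0:ℝ)..r, |t|^(m-1) * φ (u t)

private def TTop (m : ℝ) (φ : ℝ → ℝ) (ρ : ℝ) (u : ℝ → ℝ) (r : ℝ) : ℝ :=
  ρ + (1/(m-2)) * (Aop φ u r - |r|^(2-m) * Bop m φ u r)

private lemma Aop_hasDeriv {φ u : ℝ → ℝ} (hψc : Continuous fun t => φ (u t)) (r : ℝ) :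
    HasDerivAt (Aop φ u) (r * φ (u r)) r :=
  primitive_hasDerivAt (continuous_id.mul hψc) r

private lemma Bop_hasDeriv {m : ℝ} (hm : 2 < m) {φ u : ℝ → ℝ}
    (hψc : Continuous fun t => φ (u t)) (r : ℝ) :
    HasDerivAt (Bop m φ u) (|r|^(m-1) * φ (u r)) r :=
  primitive_hasDerivAt ((cont_abs_rpow (by linarith)).mul hψc) r

private lemma Aop_cont {φ u : ℝ → ℝ} (hψc : Continuous fun t => φ (u t)) :
    Continuous (Aop φ u) :=
  continuous_iff_continuousAt.2 fun r => (Aop_hasDeriv hψc r).continuousAt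

private lemma Bop_cont {m : ℝ} (hm : 2 < m) {φ u : ℝ → ℝ}
    (hψc : Continuous fun t => φ (u t)) : Continuous (Bop m φ u) :=
  continuous_iff_continuousAt.2 fun r => (Bop_hasDeriv hm hψc r).continuousAt

private lemma Aop_nonneg {φ u : ℝ → ℝ} (hψ0 : ∀ t, 0 ≤ φ (u t)) {r : ℝ} (hr : 0 ≤ r) :
    0 ≤ Aop φ u r := by
  apply intervalIntegral.integral_nonneg hr
  intro t ht
  exact mul_nonneg ht.1 (hψ0 t)

private lemma Bop_nonneg {m : ℝ} {φ u : ℝ → ℝ} (hψ0 : ∀ t, 0 ≤ φ (u t)) {r : ℝ} (hr : 0 ≤ r) :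
    0 ≤ Bop m φ u r := by
  apply intervalIntegral.integral_nonneg hr
  intro t ht
  exact mul_nonneg (by positivity) (hψ0 t)

private lemma BA_le {m : ℝ} (hm : 2 < m) {φ u : ℝ → ℝ}
    (hψc : Continuous fun t => φ (u t)) (hψ0 : ∀ t, 0 ≤ φ (u t)) {r : ℝ} (hr : 0 ≤ r) :
    |r|^(2-m) * Bop m φ u r ≤ Aop φ u r := by
  rcases eq_or_lt_of_le hr with rfl | hr0
  · simp [Aop, Bop]
  rw [abs_of_pos hr0, Bop, ← intervalIntegral.integral_const_mul]
  apply intervalIntegral.integral_mono_on hr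
  · exact (Continuous.intervalIntegrable
      (continuous_const.mul ((cont_abs_rpow (by linarith)).mul hψc)) _ _)
  · exact (continuous_id.mul hψc).intervalIntegrable _ _
  intro t ht
  rcases eq_or_lt_of_le ht.1 with rfl | ht0
  · simp [Real.zero_rpow (by intro h; nlinarith : m - 1 ≠ 0)]
  have habs : |t| = t := abs_of_pos ht0
  have h1 : t ^ (m-1) ≤ r ^ (m-2) * t := by
    have he : t ^ (m-1) = t ^ (m-2) * t ^ (1:ℝ) := by
      rw [← Real.rpow_add ht0]; ring_nf
    rw [he, Real.rpow_one]
    have := Real.rpow_le_rpow ht0.le ht.2 (by linarith : (0:ℝ) ≤ m - 2)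
    exact mul_le_mul_of_nonneg_right this ht0.le
  calc r ^ (2-m) * (|t| ^ (m-1) * φ (u t)) = (r ^ (2-m) * t ^ (m-1)) * φ (u t) := by
        rw [habs]; ring
    _ ≤ (r ^ (2-m) * (r ^ (m-2) * t)) * φ (u t) := by
        apply mul_le_mul_of_nonneg_right _ (hψ0 t)
        exact mul_le_mul_of_nonneg_left h1 (by positivity)
    _ = (r ^ (2-m) * r ^ (m-2)) * t * φ (u t) := by ring
    _ = t * φ (u t) := by rw [← Real.rpow_add hr0]; norm_num

private lemma Aop_quad {φ u : ℝ → ℝ} (hψc : Continuous fun t => φ (u t))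
    {C : ℝ} (hub : ∀ t, φ (u t) ≤ C) {r : ℝ} (hr : 0 ≤ r) :
    Aop φ u r ≤ C * r^2 / 2 := by
  have h : Aop φ u r ≤ ∫ t in (0:ℝ)..r, t * C := by
    apply intervalIntegral.integral_mono_on hr
      ((continuous_id.mul hψc).intervalIntegrable _ _)
      ((continuous_id.mul continuous_const).intervalIntegrable _ _)
    intro t ht
    exact mul_le_mul_of_nonneg_left (hub t) ht.1
  calc Aop φ u r ≤ ∫ t in (0:ℝ)..r, t * C := h
    _ = C * r^2/2 := by
        simp [intervalIntegral.integral_mul_const, integral_id]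
        ring

private lemma TTop_contOn {m : ℝ} (hm : 2 < m) {φ u : ℝ → ℝ} (ρ : ℝ)
    (hψc : Continuous fun t => φ (u t)) (hψ0 : ∀ t, 0 ≤ φ (u t))
    {C : ℝ} (hub : ∀ t, φ (u t) ≤ C) :
    ContinuousOn (TTop m φ ρ u) (Ici 0) := by
  have hterm2 : ContinuousOn (fun r => |r|^(2-m) * Bop m φ u r) (Ici 0) := by
    intro r hr
    rcases eq_or_lt_of_le (Set.mem_Ici.mp hr) with rfl | hr0
    · -- continuity at 0 by squeeze
      have hval : |(0:ℝ)|^(2-m) * Bop m φ u 0 = 0 := by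
        simp [Bop, Real.zero_rpow (by intro h; nlinarith : (2:ℝ) - m ≠ 0)]
      unfold ContinuousWithinAt
      beta_reduce
      rw [hval]
      refine squeeze_zero' (g := fun x => C * x^2/2)
        (eventually_mem_nhdsWithin.mono ?_) (eventually_mem_nhdsWithin.mono ?_) ?_
      · intro x hx
        exact mul_nonneg (by positivity) (Bop_nonneg hψ0 hx)
      · intro x hx
        exact le_trans (BA_le hm hψc hψ0 hx) (Aop_quad hψc hub hx)
      · have hcont : Continuous fun x : ℝ => C * x^2/2 := by continuity
        exact (hcont.tendsto' 0 0 (by norm_num)).mono_left nhdsWithin_le_nhds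
    · apply ContinuousAt.continuousWithinAt
      apply ContinuousAt.mul _ (Bop_cont hm hψc).continuousAt
      exact ContinuousAt.comp (Real.continuousAt_rpow_const _ _
        (Or.inl (by simp [abs_of_pos hr0]; exact hr0.ne'))) continuous_abs.continuousAt
  unfold TTop
  exact continuousOn_const.add (continuousOn_const.mul
    (((Aop_cont hψc).continuousOn).sub hterm2))

private lemma TTop_ge {m : ℝ} (hm : 2 < m) {φ u : ℝ → ℝ} (ρ : ℝ)
    (hψc : Continuous fun t => φ (u t)) (hψ0 : ∀ t, 0 ≤ φ (u t)) {r : ℝ} (hr : 0 ≤ r) :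
    ρ ≤ TTop m φ ρ u r := by
  unfold TTop
  have h1 : 0 ≤ Aop φ u r - |r|^(2-m) * Bop m φ u r :=
    sub_nonneg.2 (BA_le hm hψc hψ0 hr)
  nlinarith [one_div_pos.2 (by linarith : (0:ℝ) < m - 2)]

private lemma TTop_quad {m : ℝ} (hm : 2 < m) {φ u : ℝ → ℝ} (ρ : ℝ)
    (hψc : Continuous fun t => φ (u t)) (hψ0 : ∀ t, 0 ≤ φ (u t))
    {C : ℝ} (hub : ∀ t, φ (u t) ≤ C) {r : ℝ} (hr : 0 ≤ r) :
    TTop m φ ρ u r ≤ ρ + (1/(m-2)) * (C * r^2/2) := by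
  unfold TTop
  have h2 : 0 ≤ |r|^(2-m) * Bop m φ u r :=
    mul_nonneg (by positivity) (Bop_nonneg hψ0 hr)
  have h3 : Aop φ u r ≤ C * r^2/2 := Aop_quad hψc hub hr
  have hc : (0:ℝ) < 1/(m-2) := one_div_pos.2 (by linarith)
  nlinarith

private lemma TTop_invariant {m : ℝ} (hm : 2 < m) {φ u : ℝ → ℝ} {ρ K : ℝ} (hK : 0 < K)
    (hρ0 : 0 ≤ ρ) (hψc : Continuous fun t => φ (u t)) (hψ0 : ∀ t, 0 ≤ φ (u t))
    {r : ℝ} (hr : 0 ≤ r)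
    (hub : ∀ t ∈ Icc (0:ℝ) r, φ (u t) ≤ K * (ρ * Real.exp (K/(m-2) * t^2/2))) :
    TTop m φ ρ u r ≤ ρ * Real.exp (K/(m-2) * r^2/2) := by
  set a := K/(m-2) with ha_def
  have ha : 0 < a := div_pos hK (by linarith)
  have step1 : Aop φ u r ≤ ∫ t in (0:ℝ)..r, (K*ρ) * (t * Real.exp (a * t^2/2)) := by
    apply intervalIntegral.integral_mono_on hr
      ((continuous_id.mul hψc).intervalIntegrable _ _)
      ((Continuous.intervalIntegrable (by continuity) _ _))
    intro t ht
    calc t * φ (u t) ≤ t * (K * (ρ * Real.exp (a * t^2/2))) :=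
          mul_le_mul_of_nonneg_left (hub t ht) ht.1
      _ = (K*ρ) * (t * Real.exp (a * t^2/2)) := by ring
  have step2 : (∫ t in (0:ℝ)..r, (K*ρ) * (t * Real.exp (a * t^2/2)))
      = (m-2) * ρ * (Real.exp (a * r^2/2) - 1) := by
    rw [intervalIntegral.integral_const_mul, int_mul_exp a ha r, ha_def]
    field_simp
  have hA : Aop φ u r ≤ (m-2) * ρ * (Real.exp (a * r^2/2) - 1) := step2 ▸ step1
  have h2 : 0 ≤ |r|^(2-m) * Bop m φ u r :=
    mul_nonneg (by positivity) (Bop_nonneg hψ0 hr)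
  unfold TTop
  have hc : (0:ℝ) < 1/(m-2) := one_div_pos.2 (by linarith)
  have h3 : (1/(m-2)) * Aop φ u r ≤ ρ * (Real.exp (a * r^2/2) - 1) := by
    calc (1/(m-2)) * Aop φ u r ≤ (1/(m-2)) * ((m-2) * ρ * (Real.exp (a * r^2/2) - 1)) :=
          mul_le_mul_of_nonneg_left hA hc.le
      _ = ρ * (Real.exp (a * r^2/2) - 1) := by
          rw [one_div, inv_mul_eq_div, div_eq_iff (by linarith : m - (2:ℝ) ≠ 0)]
          ring
  nlinarith [mul_nonneg hc.le h2]

set_option maxHeartbeats 1000000 in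
private lemma TTop_contract {m : ℝ} (hm : 2 < m) {φ u v : ℝ → ℝ} (ρ : ℝ) {K : ℝ} (hK : 0 < K)
    (hψcu : Continuous fun t => φ (u t)) (hψcv : Continuous fun t => φ (v t))
    (hlip : ∀ t, |φ (u t) - φ (v t)| ≤ K * |u t - v t|)
    {D : ℝ} (hD : 0 ≤ D) (n : ℕ) {L r : ℝ} (hr : r ∈ Icc 0 L)
    (huv : ∀ t ∈ Icc (0:ℝ) L, |u t - v t| ≤ D * t^(2*n)) :
    |TTop m φ ρ u r - TTop m φ ρ v r| ≤ (K/(m-2)) * D / (n+1) * r^(2*(n+1)) := by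
  have hm2 : (0:ℝ) < m - 2 := by linarith
  rcases eq_or_lt_of_le hr.1 with rfl | hr0
  · have h0 : ∀ w : ℝ → ℝ, TTop m φ ρ w 0 = ρ := by
      intro w; simp [TTop, Aop, Bop]
    rw [h0, h0, sub_self, abs_zero]
    positivity
  have hIcc : ∀ t ∈ Icc (0:ℝ) r, t ∈ Icc (0:ℝ) L := fun t ht => ⟨ht.1, ht.2.trans hr.2⟩
  -- pointwise bound on the φ-difference
  have hptw : ∀ t ∈ Icc (0:ℝ) r, |φ (u t) - φ (v t)| ≤ K * D * t^(2*n) := by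
    intro t ht
    calc |φ (u t) - φ (v t)| ≤ K * |u t - v t| := hlip t
      _ ≤ K * (D * t^(2*n)) := mul_le_mul_of_nonneg_left (huv t (hIcc t ht)) hK.le
      _ = K * D * t^(2*n) := by ring
  have hintpow : (∫ t in (0:ℝ)..r, t^(2*n+1)) = r^(2*n+2)/(2*n+2) := by
    rw [integral_pow]
    norm_num
    ring
  -- bound for the A-difference
  have hA : |Aop φ u r - Aop φ v r| ≤ K * D * (r^(2*n+2)/(2*n+2)) := by
    have hsub : (∫ t in (0:ℝ)..r, t * φ (u t)) - (∫ t in (0:ℝ)..r, t * φ (v t))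
        = ∫ t in (0:ℝ)..r, (t * φ (u t) - t * φ (v t)) :=
      (intervalIntegral.integral_sub ((continuous_id.mul hψcu).intervalIntegrable _ _)
        ((continuous_id.mul hψcv).intervalIntegrable _ _)).symm
    unfold Aop
    rw [hsub]
    refine le_trans (intervalIntegral.abs_integral_le_integral_abs hr.1) ?_
    have : (∫ t in (0:ℝ)..r, |t * φ (u t) - t * φ (v t)|)
        ≤ ∫ t in (0:ℝ)..r, (K*D) * t^(2*n+1) := by
      apply intervalIntegral.integral_mono_on hr.1
      · exact (Continuous.intervalIntegrable (by continuity) _ _).abs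
      · exact Continuous.intervalIntegrable (by continuity) _ _
      intro t ht
      have : |t * φ (u t) - t * φ (v t)| = |t| * |φ (u t) - φ (v t)| := by
        rw [← abs_mul]; ring_nf
      rw [this, abs_of_nonneg ht.1]
      calc t * |φ (u t) - φ (v t)| ≤ t * (K * D * t^(2*n)) :=
            mul_le_mul_of_nonneg_left (hptw t ht) ht.1
        _ = (K*D) * t^(2*n+1) := by ring
    rw [intervalIntegral.integral_const_mul, hintpow] at this
    calc (∫ t in (0:ℝ)..r, |t * φ (u t) - t * φ (v t)|) ≤ K*D * (r^(2*n+2)/(2*n+2)) := this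
      _ = K * D * (r^(2*n+2)/(2*n+2)) := by ring
  -- bound for the B-difference
  have hB : |Bop m φ u r - Bop m φ v r| ≤ K * D * (r^((m-1+2*n)+1) / ((m-1+2*n)+1)) := by
    have hsub : (∫ t in (0:ℝ)..r, |t|^(m-1) * φ (u t)) - (∫ t in (0:ℝ)..r, |t|^(m-1) * φ (v t))
        = ∫ t in (0:ℝ)..r, ((|t|^(m-1)) * φ (u t) - (|t|^(m-1)) * φ (v t)) :=
      (intervalIntegral.integral_sub (((cont_abs_rpow (by linarith)).mul hψcu).intervalIntegrable _ _)
        (((cont_abs_rpow (by linarith)).mul hψcv).intervalIntegrable _ _)).symm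
    unfold Bop
    rw [hsub]
    refine le_trans (intervalIntegral.abs_integral_le_integral_abs hr.1) ?_
    have hmono : (∫ t in (0:ℝ)..r, |(|t|^(m-1)) * φ (u t) - (|t|^(m-1)) * φ (v t)|)
        ≤ ∫ t in (0:ℝ)..r, (K*D) * |t|^(m-1+2*n) := by
      apply intervalIntegral.integral_mono_on hr.1
      · exact (Continuous.intervalIntegrable
          (((cont_abs_rpow (by linarith)).mul hψcu).sub
            ((cont_abs_rpow (by linarith)).mul hψcv)) _ _).abs
      · exact Continuous.intervalIntegrable
          (continuous_const.mul (cont_abs_rpow (by linarith))) _ _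
      intro t ht
      have he1 : |(|t|^(m-1)) * φ (u t) - (|t|^(m-1)) * φ (v t)|
          = |t|^(m-1) * |φ (u t) - φ (v t)| := by
        rw [← mul_sub, abs_mul, abs_of_nonneg (by positivity : (0:ℝ) ≤ |t|^(m-1))]
      rw [he1]
      have he2 : |t|^(m-1) * (K * D * t^(2*n)) = (K*D) * |t|^(m-1+2*n) := by
        rw [Real.rpow_add' (abs_nonneg t) (by intro h; nlinarith [(by positivity : (0:ℝ) ≤ (2*n:ℝ))] : m-1+2*n ≠ 0)]
        rw [show ((2*n : ℝ)) = ((2*n : ℕ) : ℝ) by push_cast; ring, Real.rpow_natCast,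
          abs_of_nonneg ht.1]
        ring
      calc |t|^(m-1) * |φ (u t) - φ (v t)| ≤ |t|^(m-1) * (K * D * t^(2*n)) :=
            mul_le_mul_of_nonneg_left (hptw t ht) (by positivity)
        _ = (K*D) * |t|^(m-1+2*n) := he2
    rw [intervalIntegral.integral_const_mul,
      int_abs_rpow (show (0:ℝ) < m-1+2*n by
        have h2n : (0:ℝ) ≤ 2*(n:ℝ) := by positivity
        linarith) hr.1] at hmono
    calc _ ≤ (K*D) * (r^((m-1+2*n)+1)/((m-1+2*n)+1)) := hmono
      _ = K * D * (r^((m-1+2*n)+1) / ((m-1+2*n)+1)) := by ring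
  -- combine the two bounds
  have hc : (0:ℝ) < 1/(m-2) := one_div_pos.2 hm2
  have habs2 : (0:ℝ) ≤ |r|^(2-m) := by positivity
  have e1 : |r|^(2-m) * (r ^ ((m-1+2*n)+1) / ((m-1+2*n)+1)) = r^(2*(n+1)) / (m+2*n) := by
    rw [abs_of_pos hr0, mul_div_assoc', ← Real.rpow_add hr0,
      show (2-m) + ((m-1+2*n)+1) = ((2*(n+1):ℕ):ℝ) by push_cast; ring,
      Real.rpow_natCast,
      show ((m-1+2*n)+1 : ℝ) = m+2*n by ring]
  have hBB : |r|^(2-m) * |Bop m φ u r - Bop m φ v r| ≤ K * D * (r^(2*(n+1)) / (2*n+2)) := by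
    calc |r|^(2-m) * |Bop m φ u r - Bop m φ v r|
        ≤ |r|^(2-m) * (K * D * (r^((m-1+2*n)+1) / ((m-1+2*n)+1))) :=
          mul_le_mul_of_nonneg_left hB habs2
      _ = K * D * (|r|^(2-m) * (r^((m-1+2*n)+1) / ((m-1+2*n)+1))) := by ring
      _ = K * D * (r^(2*(n+1)) / (m+2*n)) := by rw [e1]
      _ ≤ K * D * (r^(2*(n+1)) / (2*n+2)) := by
          have h2n2 : (0:ℝ) < 2*(n:ℝ)+2 := by positivity
          have hKD : (0:ℝ) ≤ K*D := mul_nonneg hK.le hD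
          have hle : (2*(n:ℝ)+2) ≤ m+2*n := by linarith
          have := div_le_div_of_nonneg_left (pow_nonneg hr.1 (2*(n+1))) h2n2 hle
          exact mul_le_mul_of_nonneg_left this hKD
  have hA2 : |Aop φ u r - Aop φ v r| ≤ K * D * (r^(2*(n+1)) / (2*n+2)) := by
    rw [show 2*(n+1) = 2*n+2 from by ring]
    exact hA
  have hsplit : |TTop m φ ρ u r - TTop m φ ρ v r|
      ≤ (1/(m-2)) * (|Aop φ u r - Aop φ v r|
          + |r|^(2-m) * |Bop m φ u r - Bop m φ v r|) := by
    have hrw : TTop m φ ρ u r - TTop m φ ρ v r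
        = (1/(m-2)) * ((Aop φ u r - Aop φ v r)
            - |r|^(2-m) * (Bop m φ u r - Bop m φ v r)) := by
      unfold TTop; ring
    rw [hrw, abs_mul, abs_of_pos hc]
    apply mul_le_mul_of_nonneg_left _ hc.le
    calc |(Aop φ u r - Aop φ v r) - |r|^(2-m) * (Bop m φ u r - Bop m φ v r)|
        ≤ |Aop φ u r - Aop φ v r| + |(|r|^(2-m) * (Bop m φ u r - Bop m φ v r))| := by
          rw [sub_eq_add_neg]
          refine le_trans (abs_add_le _ _) ?_
          rw [abs_neg]
      _ = |Aop φ u r - Aop φ v r| + |r|^(2-m) * |Bop m φ u r - Bop m φ v r| := by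
          rw [abs_mul, abs_of_nonneg habs2]
  calc |TTop m φ ρ u r - TTop m φ ρ v r|
      ≤ (1/(m-2)) * (|Aop φ u r - Aop φ v r|
          + |r|^(2-m) * |Bop m φ u r - Bop m φ v r|) := hsplit
    _ ≤ (1/(m-2)) * (K * D * (r^(2*(n+1)) / (2*n+2)) + K * D * (r^(2*(n+1)) / (2*n+2))) := by
        apply mul_le_mul_of_nonneg_left _ hc.le
        exact add_le_add hA2 hBB
    _ = (K/(m-2)) * D / (n+1) * r^(2*(n+1)) := by
        have hn1 : ((n:ℝ)+1) ≠ 0 := by positivity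
        field_simp
        ring

private lemma Bop_limit {m : ℝ} (hm : 2 < m) {φ u : ℝ → ℝ}
    (hψc : Continuous fun t => φ (u t)) :
    Tendsto (fun r => r^(-m) * Bop m φ u r) (nhdsWithin 0 (Ioi 0)) (nhds (φ (u 0) / m)) := by
  rw [Metric.tendsto_nhdsWithin_nhds]
  intro η hη
  have hm0 : (0:ℝ) < m := by linarith
  have hη' : 0 < m * η / 2 := by positivity
  obtain ⟨δ, hδ0, hδ⟩ := Metric.continuousAt_iff.1 (hψc.continuousAt (x := 0)) (m*η/2) hη'
  refine ⟨δ, hδ0, ?_⟩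
  intro r hrIoi hrd
  have hr0 : 0 < r := hrIoi
  rw [Real.dist_eq, sub_zero, abs_of_pos hr0] at hrd
  -- the constant integral
  have hconst : (∫ t in (0:ℝ)..r, |t|^(m-1) * φ (u 0)) = φ (u 0) * (r^m / m) := by
    rw [intervalIntegral.integral_mul_const, int_abs_rpow (by linarith : (0:ℝ) < m-1) hr0.le]
    rw [show (m-1)+1 = m by ring]
    ring
  have hintegrable1 : IntervalIntegrable (fun t => |t|^(m-1) * φ (u t)) volume 0 r :=
    ((cont_abs_rpow (by linarith)).mul hψc).intervalIntegrable _ _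
  have hintegrable2 : IntervalIntegrable (fun t => |t|^(m-1) * φ (u 0)) volume 0 r :=
    ((cont_abs_rpow (by linarith)).mul continuous_const).intervalIntegrable _ _
  have hdiff : Bop m φ u r - φ (u 0) * (r^m/m)
      = ∫ t in (0:ℝ)..r, (|t|^(m-1) * φ (u t) - |t|^(m-1) * φ (u 0)) := by
    rw [intervalIntegral.integral_sub hintegrable1 hintegrable2, hconst, Bop]
  have hbound : |Bop m φ u r - φ (u 0) * (r^m/m)| ≤ (m*η/2) * (r^m/m) := by
    rw [hdiff]
    refine le_trans (intervalIntegral.abs_integral_le_integral_abs hr0.le) ?_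
    have : (∫ t in (0:ℝ)..r, |(|t|^(m-1) * φ (u t) - |t|^(m-1) * φ (u 0))|)
        ≤ ∫ t in (0:ℝ)..r, (m*η/2) * |t|^(m-1) := by
      apply intervalIntegral.integral_mono_on hr0.le
      · exact (hintegrable1.sub hintegrable2).abs
      · exact (continuous_const.mul (cont_abs_rpow (by linarith))).intervalIntegrable _ _
      intro t ht
      have he : |(|t|^(m-1) * φ (u t) - |t|^(m-1) * φ (u 0))|
          = |t|^(m-1) * |φ (u t) - φ (u 0)| := by
        rw [← mul_sub, abs_mul, abs_of_nonneg (by positivity : (0:ℝ) ≤ |t|^(m-1))]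
      rw [he]
      have hdist : dist t 0 < δ := by
        rw [Real.dist_eq, sub_zero, abs_of_nonneg ht.1]
        exact lt_of_le_of_lt ht.2 hrd
      have := (hδ hdist).le
      rw [Real.dist_eq] at this
      calc |t|^(m-1) * |φ (u t) - φ (u 0)| ≤ |t|^(m-1) * (m*η/2) :=
            mul_le_mul_of_nonneg_left this (by positivity)
        _ = (m*η/2) * |t|^(m-1) := by ring
    rw [intervalIntegral.integral_const_mul, int_abs_rpow (by linarith : (0:ℝ) < m-1) hr0.le,
      show (m-1)+1 = m by ring] at this
    exact this
  -- conclude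
  have hrm : (0:ℝ) < r^m := Real.rpow_pos_of_pos hr0 m
  have hfact : r^(-m) * (r^m) = 1 := by
    rw [← Real.rpow_add hr0]; norm_num
  have hkey : r^(-m) * Bop m φ u r - φ (u 0)/m
      = r^(-m) * (Bop m φ u r - φ (u 0) * (r^m/m)) := by
    have : r^(-m) * (φ (u 0) * (r^m/m)) = φ (u 0)/m := by
      rw [show r^(-m) * (φ (u 0) * (r^m/m)) = (r^(-m) * r^m) * (φ (u 0)/m) by ring, hfact]
      ring
    rw [mul_sub, this]
  rw [Real.dist_eq, hkey, abs_mul, abs_of_pos (Real.rpow_pos_of_pos hr0 (-m))]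
  calc r^(-m) * |Bop m φ u r - φ (u 0) * (r^m/m)| ≤ r^(-m) * ((m*η/2) * (r^m/m)) :=
        mul_le_mul_of_nonneg_left hbound (Real.rpow_pos_of_pos hr0 (-m)).le
    _ = (r^(-m) * r^m) * (η/2) := by field_simp
    _ = η/2 := by rw [hfact]; ring
    _ < η := by linarith

set_option maxHeartbeats 1000000 in
private lemma exists_fixed
    {m : ℝ} (hm : 2 < m) {φ : ℝ → ℝ} (hφ0 : φ 0 = 0)
    (hφnonneg : ∀ t : ℝ, 0 ≤ t → 0 ≤ φ t)
    {ε : ℝ} (hε : 0 < ε) {K : ℝ} (hK : 1 ≤ K)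
    (hlip : ∀ x y : ℝ, x ∈ Icc 0 ε → y ∈ Icc 0 ε → |φ x - φ y| ≤ K * |x - y|)
    (hφcont : ContinuousOn φ (Icc 0 ε))
    {L : ℝ} (hL : 0 < L)
    {ρ : ℝ} (hρ0 : 0 < ρ) (hρ : ρ * Real.exp (K/(m-2) * L^2/2) ≤ ε) :
    ∃ F : ℝ → ℝ, Continuous F ∧ (∀ t, ρ ≤ F t ∧ F t ≤ ε) ∧
      ∀ r ∈ Icc (0:ℝ) L, F r = TTop m φ ρ F r := by
  have hm2 : (0:ℝ) < m - 2 := by linarith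
  have hK0 : (0:ℝ) < K := by linarith
  set a := K/(m-2) with ha_def
  have ha : 0 < a := div_pos hK0 hm2
  set g : ℝ → ℝ := fun x => ρ * Real.exp (a * x^2/2) with hg_def
  have hρg : ∀ x, ρ ≤ g x := by
    intro x
    have h1 : (1:ℝ) ≤ Real.exp (a * x^2/2) := Real.one_le_exp (by positivity)
    simp only [hg_def]
    nlinarith
  have hgL : ∀ x ∈ Icc (0:ℝ) L, g x ≤ ε := by
    intro x hx
    have hxL : x^2 ≤ L^2 := by nlinarith [hx.1, hx.2]
    have : Real.exp (a * x^2/2) ≤ Real.exp (a * L^2/2) :=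
      Real.exp_le_exp.2 (by nlinarith)
    calc g x = ρ * Real.exp (a * x^2/2) := rfl
      _ ≤ ρ * Real.exp (a * L^2/2) := mul_le_mul_of_nonneg_left this hρ0.le
      _ ≤ ε := hρ
  have hρε : ρ ≤ ε := le_trans (hρg L) (hgL L ⟨hL.le, le_rfl⟩)
  have hsub0ε : ∀ x : ℝ, x ∈ Icc ρ ε → x ∈ Icc (0:ℝ) ε := fun x hx => ⟨le_trans hρ0.le hx.1, hx.2⟩
  have hφle : ∀ x ∈ Icc (0:ℝ) ε, φ x ≤ K * x := by
    intro x hx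
    have h0 : (0:ℝ) ∈ Icc (0:ℝ) ε := ⟨le_rfl, hε.le⟩
    have := hlip x 0 hx h0
    rw [hφ0, sub_zero, sub_zero, abs_of_nonneg hx.1] at this
    exact le_trans (le_abs_self _) this
  have hφub : ∀ x ∈ Icc (0:ℝ) ε, φ x ≤ K * ε :=
    fun x hx => le_trans (hφle x hx) (mul_le_mul_of_nonneg_left hx.2 hK0.le)
  -- the closed invariant set S
  set S : Set C(Icc (0:ℝ) L, ℝ) := {f | ∀ x : Icc (0:ℝ) L, f x ∈ Icc ρ (g x.1)} with hS_def
  -- extension operator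
  let E : ↥S → ℝ → ℝ := fun f => IccExtend hL.le ⇑f.1
  have hEc : ∀ f : ↥S, Continuous (E f) := fun f => f.1.continuous.Icc_extend'
  have hEeq : ∀ (f : ↥S) (t : ℝ) (ht : t ∈ Icc (0:ℝ) L), E f t = f.1 ⟨t, ht⟩ := by
    intro f t ht
    exact congrArg f.1 (projIcc_of_mem hL.le ht)
  have hEmem : ∀ (f : ↥S) (t : ℝ), E f t ∈ Icc ρ ε := by
    intro f t
    have h1 := f.2 (projIcc 0 L hL.le t)
    exact ⟨h1.1, le_trans h1.2 (hgL _ (projIcc 0 L hL.le t).2)⟩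
  have hψc : ∀ f : ↥S, Continuous fun t => φ (E f t) := by
    intro f
    exact hφcont.comp_continuous (hEc f) (fun t => hsub0ε _ (hEmem f t))
  have hψ0 : ∀ (f : ↥S) (t : ℝ), 0 ≤ φ (E f t) :=
    fun f t => hφnonneg _ (le_trans hρ0.le (hEmem f t).1)
  have hψub : ∀ (f : ↥S) (t : ℝ), φ (E f t) ≤ K * ε :=
    fun f t => hφub _ (hsub0ε _ (hEmem f t))
  -- the operator
  have hTcont : ∀ f : ↥S, Continuous fun x : Icc (0:ℝ) L => TTop m φ ρ (E f) x.1 := by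
    intro f
    exact ContinuousOn.restrict ((TTop_contOn hm ρ (hψc f) (hψ0 f) (hψub f)).mono
      (fun x hx => hx.1))
  have hTmem : ∀ f : ↥S,
      (⟨fun x => TTop m φ ρ (E f) x.1, hTcont f⟩ : C(Icc (0:ℝ) L, ℝ)) ∈ S := by
    intro f x
    refine ⟨TTop_ge hm ρ (hψc f) (hψ0 f) x.2.1, ?_⟩
    have hub : ∀ t ∈ Icc (0:ℝ) (x:ℝ), φ (E f t) ≤ K * (ρ * Real.exp (K/(m-2) * t^2/2)) := by
      intro t ht
      have htL : t ∈ Icc (0:ℝ) L := ⟨ht.1, le_trans ht.2 x.2.2⟩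
      have hEf : E f t ∈ Icc ρ (g t) := by
        rw [hEeq f t htL]; exact f.2 ⟨t, htL⟩
      calc φ (E f t) ≤ K * E f t := hφle _ (hsub0ε _ (hEmem f t))
        _ ≤ K * (ρ * Real.exp (K/(m-2) * t^2/2)) := by
            apply mul_le_mul_of_nonneg_left _ hK0.le
            rw [← ha_def]; exact hEf.2
    have := TTop_invariant hm hK0 hρ0.le (hψc f) (hψ0 f) x.2.1 hub
    rw [← ha_def] at this
    exact this
  let T : ↥S → ↥S := fun f => ⟨⟨fun x => TTop m φ ρ (E f) x.1, hTcont f⟩, hTmem f⟩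
  have hTapply : ∀ (f : ↥S) (t : ℝ) (ht : t ∈ Icc (0:ℝ) L),
      E (T f) t = TTop m φ ρ (E f) t := by
    intro f t ht
    rw [hEeq (T f) t ht]
    rfl
  -- instances
  haveI : Nonempty ↥S := ⟨⟨ContinuousMap.const _ ρ, fun x => ⟨le_rfl, hρg x.1⟩⟩⟩
  have hSclosed : IsClosed S := by
    have : S = ⋂ (x : Icc (0:ℝ) L), (fun f : C(Icc (0:ℝ) L, ℝ) => f x) ⁻¹' (Icc ρ (g x.1)) := by
      ext f
      simp only [hS_def, mem_setOf_eq, mem_iInter, mem_preimage]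
    rw [this]
    exact isClosed_iInter fun x => isClosed_Icc.preimage (continuous_eval_const x)
  haveI : CompleteSpace ↥S := hSclosed.completeSpace_coe
  -- the iteration estimate
  have hclaim : ∀ (n : ℕ) (f h : ↥S), ∀ t ∈ Icc (0:ℝ) L,
      |E (T^[n] f) t - E (T^[n] h) t| ≤ dist f h * (a^n * t^(2*n) / n.factorial) := by
    intro n
    induction n with
    | zero =>
      intro f h t ht
      rw [Function.iterate_zero, id_eq, id_eq, hEeq f t ht, hEeq h t ht, Subtype.dist_eq]
      have h1 : |f.1 ⟨t, ht⟩ - h.1 ⟨t, ht⟩| ≤ dist f.1 h.1 := by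
        rw [← Real.dist_eq]; exact ContinuousMap.dist_apply_le_dist _
      simpa using h1
    | succ n ih =>
      intro f h t ht
      rw [Function.iterate_succ_apply', Function.iterate_succ_apply',
        hTapply _ t ht, hTapply _ t ht]
      have hfact0 : (0:ℝ) < n.factorial := by exact_mod_cast n.factorial_pos
      have hD : (0:ℝ) ≤ dist f h * a^n / n.factorial := by positivity
      have ih' : ∀ s ∈ Icc (0:ℝ) L,
          |E (T^[n] f) s - E (T^[n] h) s| ≤ (dist f h * a^n / n.factorial) * s^(2*n) := by
        intro s hs
        calc |E (T^[n] f) s - E (T^[n] h) s| ≤ dist f h * (a^n * s^(2*n) / n.factorial) :=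
              ih f h s hs
          _ = (dist f h * a^n / n.factorial) * s^(2*n) := by ring
      have hlip' : ∀ s : ℝ, |φ (E (T^[n] f) s) - φ (E (T^[n] h) s)|
          ≤ K * |E (T^[n] f) s - E (T^[n] h) s| := by
        intro s
        exact hlip _ _ (hsub0ε _ (hEmem _ s)) (hsub0ε _ (hEmem _ s))
      have := TTop_contract hm ρ hK0 (hψc _) (hψc _) hlip' hD n ht ih'
      rw [← ha_def] at this
      calc |TTop m φ ρ (E (T^[n] f)) t - TTop m φ ρ (E (T^[n] h)) t|
          ≤ a * (dist f h * a^n / n.factorial) / (n+1) * t^(2*(n+1)) := this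
        _ = dist f h * (a^(n+1) * t^(2*(n+1)) / (n+1).factorial) := by
            rw [Nat.factorial_succ]
            push_cast
            field_simp
            ring
  -- distance estimate for iterates
  have hdist : ∀ (n : ℕ) (f h : ↥S),
      dist (T^[n] f) (T^[n] h) ≤ ((a*L^2)^n / n.factorial) * dist f h := by
    intro n f h
    have hC : (0:ℝ) ≤ ((a*L^2)^n / n.factorial) * dist f h := by positivity
    rw [Subtype.dist_eq]
    refine (ContinuousMap.dist_le hC).2 ?_
    intro x
    rw [Real.dist_eq]
    have he : ∀ (w : ↥S), (T^[n] w).1 x = E (T^[n] w) x.1 := by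
      intro w
      rw [hEeq _ _ x.2]
    rw [he f, he h]
    have hx2 : (x:ℝ)^2 ≤ L^2 := by nlinarith [x.2.1, x.2.2]
    calc |E (T^[n] f) x.1 - E (T^[n] h) x.1|
        ≤ dist f h * (a^n * (x:ℝ)^(2*n) / n.factorial) := hclaim n f h x.1 x.2
      _ ≤ dist f h * (a^n * (L^2)^n / n.factorial) := by
          apply mul_le_mul_of_nonneg_left _ dist_nonneg
          apply div_le_div_of_nonneg_right ?_ (by positivity : (0:ℝ) ≤ (n.factorial:ℝ))
          apply mul_le_mul_of_nonneg_left _ (by positivity)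
          rw [pow_mul]
          exact pow_le_pow_left₀ (sq_nonneg _) hx2 n
      _ = ((a*L^2)^n / n.factorial) * dist f h := by
          rw [mul_pow]; ring
  -- pick a contracting iterate
  obtain ⟨n, hn⟩ : ∃ n : ℕ, (a*L^2)^n / n.factorial < 1 := by
    have := FloorSemiring.tendsto_pow_div_factorial_atTop (a*L^2)
    exact (this.eventually (gt_mem_nhds one_pos)).exists
  have hq0 : (0:ℝ) ≤ (a*L^2)^n / n.factorial := by positivity
  have hcontr : ContractingWith ((a*L^2)^n / n.factorial).toNNReal (T^[n]) := by
    constructor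
    · have : (((a*L^2)^n / n.factorial).toNNReal : ℝ) < 1 := by
        rw [Real.coe_toNNReal _ hq0]; exact hn
      exact_mod_cast this
    · apply LipschitzWith.of_dist_le_mul
      intro f h
      rw [Real.coe_toNNReal _ hq0]
      exact hdist n f h
  obtain ⟨F0, hF0⟩ : ∃ f : ↥S, T f = f := ⟨_, hcontr.isFixedPt_fixedPoint_iterate⟩
  refine ⟨E F0, hEc F0, fun t => ⟨(hEmem F0 t).1, (hEmem F0 t).2⟩, ?_⟩
  intro r hr
  conv_lhs => rw [← hF0]
  exact hTapply F0 r hr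

private def vF (m : ℝ) (φ F : ℝ → ℝ) (r : ℝ) : ℝ := |r|^(1-m) * Bop m φ F r
private def wF (m : ℝ) (φ F : ℝ → ℝ) (r : ℝ) : ℝ :=
  if r = 0 then φ (F 0) / m else φ (F r) - (m-1) * (r^(-m) * Bop m φ F r)

set_option maxHeartbeats 1000000 in
private lemma isSol_of_fixed
    {m : ℝ} (hm : 2 < m) {φ : ℝ → ℝ} (hφnonneg : ∀ t : ℝ, 0 ≤ t → 0 ≤ φ t)
    {ε K : ℝ} (hε : 0 < ε) (hK0 : 0 < K)
    (hφub : ∀ x ∈ Icc (0:ℝ) ε, φ x ≤ K * ε)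
    (hφcont : ContinuousOn φ (Icc 0 ε))
    {L ρ : ℝ} (hL : 0 < L) (hρ0 : 0 < ρ)
    {F : ℝ → ℝ} (hFc : Continuous F) (hFmem : ∀ t, ρ ≤ F t ∧ F t ≤ ε)
    (heq : ∀ r ∈ Icc (0:ℝ) L, F r = TTop m φ ρ F r) :
    IsSolOn m φ ρ (ENNReal.ofReal L) F := by
  have hm2 : (0:ℝ) < m - 2 := by linarith
  have hm0 : (0:ℝ) < m := by linarith
  have hFmem' : ∀ t, F t ∈ Icc (0:ℝ) ε := fun t => ⟨le_trans hρ0.le (hFmem t).1, (hFmem t).2⟩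
  have hψc : Continuous fun t => φ (F t) := hφcont.comp_continuous hFc hFmem'
  have hψ0 : ∀ t, 0 ≤ φ (F t) := fun t => hφnonneg _ (hFmem' t).1
  have hψub : ∀ t, φ (F t) ≤ K * ε := fun t => hφub _ (hFmem' t)
  have hdom : odeDom (ENNReal.ofReal L) = Ico 0 L := by
    ext r
    simp only [odeDom, mem_setOf_eq, mem_Ico]
    exact and_congr_right fun _ => ENNReal.ofReal_lt_ofReal_iff hL
  have hB0 : Bop m φ F 0 = 0 := intervalIntegral.integral_same
  have hA0 : Aop φ F 0 = 0 := intervalIntegral.integral_same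
  have hF0 : F 0 = ρ := by
    rw [heq 0 ⟨le_rfl, hL.le⟩]
    unfold TTop
    rw [hA0, hB0, abs_zero, Real.zero_rpow (by intro h; nlinarith : (2:ℝ) - m ≠ 0)]
    ring
  have hv0 : vF m φ F 0 = 0 := by
    unfold vF
    rw [abs_zero, Real.zero_rpow (by intro h; nlinarith : (1:ℝ) - m ≠ 0)]
    ring
  -- derivative of F away from zero
  have hFd : ∀ r ∈ Ioo (0:ℝ) L, HasDerivAt F (vF m φ F r) r := by
    intro r hr
    have hev : F =ᶠ[𝓝 r] (fun x => ρ + (1/(m-2)) * (Aop φ F x - x^(2-m) * Bop m φ F x)) := by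
      filter_upwards [Ioo_mem_nhds hr.1 hr.2] with x hx
      rw [heq x ⟨hx.1.le, hx.2.le⟩]
      unfold TTop
      rw [abs_of_pos hx.1]
    have hA' := Aop_hasDeriv hψc r
    have hB' := Bop_hasDeriv hm hψc r
    have hrpow : HasDerivAt (fun x : ℝ => x^(2-m)) ((2-m) * r^(2-m-1)) r :=
      Real.hasDerivAt_rpow_const (Or.inl hr.1.ne')
    have hG := ((hA'.sub (hrpow.mul hB')).const_mul (1/(m-2))).const_add ρ
    have hG' : HasDerivAt (fun x => ρ + (1/(m-2)) * (Aop φ F x - x^(2-m) * Bop m φ F x))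
        (vF m φ F r) r := by
      refine hG.congr_deriv (Eq.symm ?_)
      unfold vF
      rw [abs_of_pos hr.1]
      have e1 : r^(2-m) * (r^(m-1) * φ (F r)) = r * φ (F r) := by
        rw [← mul_assoc, ← Real.rpow_add hr.1]
        norm_num
      have e2 : r^(2-m-1) = r^(1-m) := by ring_nf
      rw [e1, e2]
      field_simp
      ring
    exact hG'.congr_of_eventuallyEq hev
  -- derivative of v away from zero
  have hvd : ∀ r : ℝ, 0 < r →
      HasDerivAt (vF m φ F) (φ (F r) - (m-1) * (r^(-m) * Bop m φ F r)) r := by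
    intro r hr0
    have hev : vF m φ F =ᶠ[𝓝 r] fun x => x^(1-m) * Bop m φ F x := by
      filter_upwards [eventually_gt_nhds hr0] with x hx
      unfold vF
      rw [abs_of_pos hx]
    have hB' := Bop_hasDeriv hm hψc r
    have hrpow : HasDerivAt (fun x : ℝ => x^(1-m)) ((1-m) * r^(1-m-1)) r :=
      Real.hasDerivAt_rpow_const (Or.inl hr0.ne')
    have hG := hrpow.mul hB'
    have hG' : HasDerivAt (fun x => x^(1-m) * Bop m φ F x)
        (φ (F r) - (m-1) * (r^(-m) * Bop m φ F r)) r := by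
      refine hG.congr_deriv (Eq.symm ?_)
      rw [abs_of_pos hr0]
      have e1 : r^(1-m) * (r^(m-1) * φ (F r)) = φ (F r) := by
        rw [← mul_assoc, ← Real.rpow_add hr0]
        norm_num
      have e2 : r^(1-m-1) = r^(-m) := by ring_nf
      rw [e1, e2]
      ring
    exact hG'.congr_of_eventuallyEq hev
  -- quadratic bound near 0
  have hquad : ∀ r ∈ Icc (0:ℝ) L, ρ ≤ F r ∧ F r - ρ ≤ (1/(m-2)) * (K*ε*r^2/2) := by
    intro r hr
    rw [heq r hr]
    exact ⟨TTop_ge hm ρ hψc hψ0 hr.1, by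
      have := TTop_quad hm ρ hψc hψ0 hψub hr.1
      linarith⟩
  -- slope limit at 0 for F
  have hslope : Tendsto (slope F 0) (nhdsWithin 0 (Ioi 0)) (nhds 0) := by
    have hsl : ∀ x, slope F 0 x = (F x - ρ)/x := by
      intro x
      rw [slope_def_field, hF0, sub_zero]
    refine squeeze_zero' (g := fun x => (1/(m-2)) * (K*ε/2) * x) ?_ ?_ ?_
    · filter_upwards [Ioo_mem_nhdsGT_of_mem ⟨le_rfl, hL⟩] with x hx
      rw [hsl x]
      exact div_nonneg (by linarith [(hquad x ⟨hx.1.le, hx.2.le⟩).1]) hx.1.le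
    · filter_upwards [Ioo_mem_nhdsGT_of_mem ⟨le_rfl, hL⟩] with x hx
      rw [hsl x]
      rw [div_le_iff₀ hx.1]
      calc F x - ρ ≤ (1/(m-2)) * (K*ε*x^2/2) := (hquad x ⟨hx.1.le, hx.2.le⟩).2
        _ = ((1/(m-2)) * (K*ε/2) * x) * x := by ring
    · have hcont : Continuous fun x : ℝ => (1/(m-2)) * (K*ε/2) * x := by continuity
      have := hcont.tendsto' 0 0 (by norm_num)
      exact this.mono_left nhdsWithin_le_nhds
  -- slope limit at 0 for v
  have hlimB := Bop_limit hm hψc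
  have hslopev : Tendsto (slope (vF m φ F) 0) (nhdsWithin 0 (Ioi 0)) (nhds (φ (F 0) / m)) := by
    apply hlimB.congr'
    filter_upwards [eventually_mem_nhdsWithin] with x (hx : x ∈ Ioi (0:ℝ))
    rw [slope_def_field, hv0, sub_zero, sub_zero]
    unfold vF
    rw [abs_of_pos hx]
    have e1 : x^(1-m) = x^(-m) * x := by
      rw [show (1:ℝ)-m = -m + 1 by ring, Real.rpow_add hx, Real.rpow_one]
    rw [e1]
    have hxne : x ≠ 0 := ne_of_gt hx
    field_simp [hxne]
  -- the ODE on (0, L)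
  have hODE : ∀ r : ℝ, 0 < r → ENNReal.ofReal r < ENNReal.ofReal L →
      deriv (deriv F) r + ((m - 1) / r) * deriv F r = φ (F r) := by
    intro r hr0 hrR
    have hrL : r < L := (ENNReal.ofReal_lt_ofReal_iff hL).1 hrR
    have hd1 : deriv F r = vF m φ F r := (hFd r ⟨hr0, hrL⟩).deriv
    have hev2 : deriv F =ᶠ[𝓝 r] vF m φ F := by
      filter_upwards [Ioo_mem_nhds hr0 hrL] with x hx
      exact (hFd x hx).deriv
    have hd2 : deriv (deriv F) r = deriv (vF m φ F) r := hev2.deriv_eq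
    have hvdr : deriv (vF m φ F) r = φ (F r) - (m-1) * (r^(-m) * Bop m φ F r) :=
      (hvd r hr0).deriv
    rw [hd2, hvdr, hd1]
    unfold vF
    rw [abs_of_pos hr0]
    have e1 : r^(1-m) = r^(-m) * r := by
      rw [show (1:ℝ)-m = -m + 1 by ring, Real.rpow_add hr0, Real.rpow_one]
    rw [e1]
    field_simp
    ring
  -- derivWithin at 0
  have hdW : HasDerivWithinAt F 0 (Ici 0) 0 := by
    rw [hasDerivWithinAt_iff_tendsto_slope]
    have : Ici (0:ℝ) \ {0} = Ioi 0 := Ici_sdiff_left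
    rw [this]
    exact hslope
  -- derivatives within Ico 0 L
  have hvW : ∀ r ∈ Ico (0:ℝ) L, HasDerivWithinAt F (vF m φ F r) (Ico 0 L) r := by
    intro r hr
    rcases eq_or_lt_of_le hr.1 with rfl | hr0
    · rw [hasDerivWithinAt_iff_tendsto_slope, hv0]
      refine hslope.mono_left (nhdsWithin_mono _ ?_)
      intro x hx
      exact lt_of_le_of_ne hx.1.1 (Ne.symm hx.2)
    · exact (hFd r ⟨hr0, hr.2⟩).hasDerivWithinAt
  have hwW : ∀ r ∈ Ico (0:ℝ) L, HasDerivWithinAt (vF m φ F) (wF m φ F r) (Ico 0 L) r := by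
    intro r hr
    rcases eq_or_lt_of_le hr.1 with rfl | hr0
    · rw [hasDerivWithinAt_iff_tendsto_slope]
      unfold wF
      rw [if_pos rfl]
      refine hslopev.mono_left (nhdsWithin_mono _ ?_)
      intro x hx
      exact lt_of_le_of_ne hx.1.1 (Ne.symm hx.2)
    · have := (hvd r hr0).hasDerivWithinAt (s := Ico 0 L)
      unfold wF
      rw [if_neg hr0.ne']
      exact this
  -- continuity of w on Ico 0 L
  have hwc : ContinuousOn (wF m φ F) (Ico 0 L) := by
    intro r hr
    rcases eq_or_lt_of_le hr.1 with rfl | hr0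
    · unfold ContinuousWithinAt
      have hw0 : wF m φ F 0 = φ (F 0) / m := by unfold wF; rw [if_pos rfl]
      rw [hw0]
      have key0 : Tendsto (wF m φ F) (nhdsWithin 0 (Ioi 0)) (nhds (φ (F 0)/m)) := by
        have h1 : Tendsto (fun x => φ (F x) - (m-1) * (x^(-m) * Bop m φ F x))
            (nhdsWithin 0 (Ioi 0)) (nhds (φ (F 0) - (m-1) * (φ (F 0)/m))) := by
          exact ((hψc.tendsto 0).mono_left nhdsWithin_le_nhds).sub (hlimB.const_mul (m-1))
        have hvaleq : φ (F 0) - (m-1) * (φ (F 0)/m) = φ (F 0)/m := by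
          field_simp
          ring
        rw [hvaleq] at h1
        apply h1.congr'
        filter_upwards [eventually_mem_nhdsWithin] with x (hx : x ∈ Ioi (0:ℝ))
        unfold wF
        rw [if_neg (ne_of_gt hx)]
      have hsub : Ico (0:ℝ) L ⊆ {0} ∪ Ioi 0 := by
        intro x hx
        rcases eq_or_lt_of_le hx.1 with rfl | h
        · exact Or.inl rfl
        · exact Or.inr h
      have hle : nhdsWithin (0:ℝ) (Ico 0 L) ≤ nhdsWithin 0 ({0} ∪ Ioi 0) :=
        nhdsWithin_mono 0 hsub
      rw [nhdsWithin_union] at hle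
      refine Tendsto.mono_left (tendsto_sup.2 ⟨?_, key0⟩) hle
      · rw [nhdsWithin_singleton]
        have := tendsto_pure_nhds (wF m φ F) 0
        rw [hw0] at this
        exact this
    · apply ContinuousAt.continuousWithinAt
      have hev : wF m φ F =ᶠ[𝓝 r] fun x => φ (F x) - (m-1) * (x^(-m) * Bop m φ F x) := by
        filter_upwards [eventually_ne_nhds hr0.ne'] with x hx
        unfold wF
        rw [if_neg hx]
      have hca : ContinuousAt (fun x => φ (F x) - (m-1) * (x^(-m) * Bop m φ F x)) r := by
        apply ContinuousAt.sub hψc.continuousAt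
        apply ContinuousAt.mul continuousAt_const
        apply ContinuousAt.mul _ (Bop_cont hm hψc).continuousAt
        exact Real.continuousAt_rpow_const _ _ (Or.inl hr0.ne')
      exact hca.congr hev.symm
  -- assemble ContDiffOn
  have hsUD : UniqueDiffOn ℝ (Ico (0:ℝ) L) := uniqueDiffOn_Ico 0 L
  have hCD : ContDiffOn ℝ 2 F (Ico 0 L) := by
    rw [show (2 : WithTop ℕ∞) = 1 + 1 by norm_num]
    refine (contDiffOn_succ_iff_derivWithin hsUD).2
      ⟨fun r hr => (hvW r hr).differentiableWithinAt, by simp, ?_⟩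
    have hcv : ContDiffOn ℝ 1 (vF m φ F) (Ico 0 L) := by
      rw [show (1 : WithTop ℕ∞) = 0 + 1 by norm_num]
      refine (contDiffOn_succ_iff_derivWithin hsUD).2
        ⟨fun r hr => (hwW r hr).differentiableWithinAt, by simp, ?_⟩
      rw [contDiffOn_zero]
      refine ContinuousOn.congr hwc ?_
      intro r hr
      exact (hwW r hr).derivWithin (hsUD r hr)
    refine hcv.congr ?_
    intro r hr
    exact (hvW r hr).derivWithin (hsUD r hr)
  refine ⟨by rw [hdom]; exact hCD, ?_, hF0, hdW.derivWithin (uniqueDiffOn_Ici 0 0 self_mem_Ici), hODE⟩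
  intro r hr
  exact le_trans hρ0.le (hFmem r).1

/-- the maximal existence radius tends to ∞ as the initial value tends to 0⁺. -/
theorem maxRadius_tendsto_top
    (m : ℝ) (hm : 2 < m)
    (φ : ℝ → ℝ) (hφ0 : φ 0 = 0)
    (hφmono : MonotoneOn φ (Set.Ici 0))
    (hφnonneg : ∀ t : ℝ, 0 ≤ t → 0 ≤ φ t)
    (hφlip : ∀ x ∈ Set.Ici (0 : ℝ), ∃ K : NNReal, ∃ s ∈ nhdsWithin x (Set.Ici 0),
      LipschitzOnWith K φ s)
 :
    ∀ M : ℝ, 0 < M → ∃ δ : ℝ, 0 < δ ∧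
      ∀ ρ : ℝ, 0 < ρ → ρ < δ → ENNReal.ofReal M < maxRadius m φ ρ := by
  intro M hM
  have hm2 : (0:ℝ) < m - 2 := by linarith
  -- get a Lipschitz bound near 0
  obtain ⟨K₀, s, hs, hlip⟩ := hφlip 0 Set.self_mem_Ici
  obtain ⟨d, hd0, hball⟩ := Metric.mem_nhdsWithin_iff.1 hs
  set ε : ℝ := d/2 with hε_def
  have hε : 0 < ε := by positivity
  have hIccs : Icc (0:ℝ) ε ⊆ s := by
    intro x hx
    apply hball
    constructor
    · rw [Metric.mem_ball, Real.dist_eq, sub_zero, abs_of_nonneg hx.1]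
      calc x ≤ d/2 := hx.2
        _ < d := by linarith
    · exact hx.1
  have hlip' : LipschitzOnWith K₀ φ (Icc 0 ε) := hlip.mono hIccs
  set K : ℝ := max (K₀:ℝ) 1 with hK_def
  have hK1 : 1 ≤ K := le_max_right _ _
  have hK0 : (0:ℝ) < K := lt_of_lt_of_le one_pos hK1
  have hlipR : ∀ x y : ℝ, x ∈ Icc 0 ε → y ∈ Icc 0 ε → |φ x - φ y| ≤ K * |x - y| := by
    intro x y hx hy
    have h1 := hlip'.dist_le_mul x hx y hy
    rw [Real.dist_eq, Real.dist_eq] at h1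
    calc |φ x - φ y| ≤ (K₀:ℝ) * |x - y| := h1
      _ ≤ K * |x - y| := mul_le_mul_of_nonneg_right (le_max_left _ _) (abs_nonneg _)
  have hφcont : ContinuousOn φ (Icc 0 ε) := hlip'.continuousOn
  have hφle : ∀ x ∈ Icc (0:ℝ) ε, φ x ≤ K * x := by
    intro x hx
    have h0 : (0:ℝ) ∈ Icc (0:ℝ) ε := ⟨le_rfl, hε.le⟩
    have := hlipR x 0 hx h0
    rw [hφ0, sub_zero, sub_zero, abs_of_nonneg hx.1] at this
    exact le_trans (le_abs_self _) this
  have hφub : ∀ x ∈ Icc (0:ℝ) ε, φ x ≤ K * ε :=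
    fun x hx => le_trans (hφle x hx) (mul_le_mul_of_nonneg_left hx.2 hK0.le)
  set L : ℝ := M + 1 with hL_def
  have hL : 0 < L := by linarith
  refine ⟨ε / Real.exp (K/(m-2) * L^2/2), by positivity, ?_⟩
  intro ρ hρ0 hρδ
  have hρcond : ρ * Real.exp (K/(m-2) * L^2/2) ≤ ε := by
    rw [div_eq_mul_inv] at hρδ
    have hexp : (0:ℝ) < Real.exp (K/(m-2) * L^2/2) := Real.exp_pos _
    have := (lt_div_iff₀ hexp).1 (by rwa [div_eq_mul_inv])
    linarith
  obtain ⟨F, hFc, hFmem, heq⟩ :=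
    exists_fixed hm hφ0 hφnonneg hε hK1 hlipR hφcont hL hρ0 hρcond
  have hsol : IsSolOn m φ ρ (ENNReal.ofReal L) F :=
    isSol_of_fixed hm hφnonneg hε hK0 hφub hφcont hL hρ0 hFc hFmem heq
  have hmem : ENNReal.ofReal L ∈ {R : ℝ≥0∞ | 0 < R ∧ ∃ u : ℝ → ℝ, IsSolOn m φ ρ R u} :=
    ⟨ENNReal.ofReal_pos.2 hL, F, hsol⟩
  calc ENNReal.ofReal M < ENNReal.ofReal L :=
        (ENNReal.ofReal_lt_ofReal_iff hL).2 (by linarith)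
    _ ≤ maxRadius m φ ρ := le_sSup hmem
end
end
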